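/- arXiv:1711.09675 — 3 statements merged into one kernel-verified Lean document; each statement's English description precedes it below -/
import Mathlib

section
/- Let (S_m)_{m≥0} with S_m = X_1 + ⋯ + X_m be a simple symmetric random walk started at 0, where X_1, X_2, … are i.i.d. random variables taking values +1 and −1 with probability 1/2 each. Fix a real number x > 0 and a real number α with 1/2 < α < 1. Then the limit as m → ∞ of m^{1−2α} · log P(S_m > x·m^α) equals −x²/2, where m^α and m^{1−2α} denote real powers. -/
open MeasureTheory ProbabilityTheory Filter
open scoped ENNReal

lemma md_log_one_add_le {ε : ℝ} (h0 : 0 ≤ ε) :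
    Real.log (1 + ε) ≤ ε - ε ^ 2 / 2 + ε ^ 3 / 3 := by
  set F : ℝ → ℝ := fun s => s - s ^ 2 / 2 + s ^ 3 / 3 - Real.log (1 + s) with hF
  have hderiv : ∀ t : ℝ, 0 < 1 + t →
      HasDerivAt F (1 - t + t ^ 2 - (1 + t)⁻¹) t := by
    intro t ht
    have h1 : HasDerivAt (fun s : ℝ => 1 + s) 1 t := by
      simpa using (hasDerivAt_id t).const_add (1 : ℝ)
    have h2 : HasDerivAt (fun s : ℝ => Real.log (1 + s)) ((1 + t)⁻¹ * 1) t :=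
      (Real.hasDerivAt_log ht.ne').comp t h1
    have h3 : HasDerivAt (fun s : ℝ => s - s ^ 2 / 2 + s ^ 3 / 3)
        (1 - (↑2 * t ^ 1) / 2 + (↑3 * t ^ 2) / 3) t :=
      ((hasDerivAt_id t).sub ((hasDerivAt_pow 2 t).div_const 2)).add
        ((hasDerivAt_pow 3 t).div_const 3)
    have := h3.sub h2
    refine this.congr_deriv ?_
    push_cast
    ring
  have hmono : MonotoneOn F (Set.Icc 0 ε) := by
    apply monotoneOn_of_deriv_nonneg (convex_Icc 0 ε)
    · apply ContinuousOn.sub (Continuous.continuousOn (by continuity))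
      apply ContinuousOn.log (by fun_prop)
      intro s hs
      have := hs.1
      nlinarith
    · intro t ht
      rw [interior_Icc] at ht
      exact (hderiv t (by nlinarith [ht.1])).differentiableAt.differentiableWithinAt
    · intro t ht
      rw [interior_Icc] at ht
      have h1t : 0 < 1 + t := by nlinarith [ht.1]
      rw [(hderiv t h1t).deriv]
      rw [sub_nonneg, inv_le_iff_one_le_mul₀ h1t]  -- maybe wrong name
      nlinarith [ht.1]
  have h0' : (0 : ℝ) ∈ Set.Icc (0:ℝ) ε := ⟨le_rfl, h0⟩
  have hε' : ε ∈ Set.Icc (0:ℝ) ε := ⟨h0, le_rfl⟩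
  have := hmono h0' hε' h0
  simp only [hF] at this
  norm_num at this
  linarith

lemma md_log_one_sub_le {ε : ℝ} (h0 : 0 ≤ ε) (h1 : ε < 1) :
    Real.log (1 - ε) ≤ -ε - ε ^ 2 / 2 := by
  set F : ℝ → ℝ := fun s => -s - s ^ 2 / 2 - Real.log (1 - s) with hF
  have hderiv : ∀ t : ℝ, 0 < 1 - t →
      HasDerivAt F (-1 - t + (1 - t)⁻¹) t := by
    intro t ht
    have h1 : HasDerivAt (fun s : ℝ => 1 - s) (-1) t := (hasDerivAt_id t).const_sub 1
    have h2 : HasDerivAt (fun s : ℝ => Real.log (1 - s)) ((1 - t)⁻¹ * (-1)) t :=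
      (Real.hasDerivAt_log ht.ne').comp t h1
    have h3 : HasDerivAt (fun s : ℝ => -s - s ^ 2 / 2)
        (-1 - (↑2 * t ^ 1) / 2) t :=
      ((hasDerivAt_id t).neg).sub ((hasDerivAt_pow 2 t).div_const 2)
    have := h3.sub h2
    refine this.congr_deriv ?_
    push_cast
    ring
  have hmono : MonotoneOn F (Set.Icc 0 ε) := by
    apply monotoneOn_of_deriv_nonneg (convex_Icc 0 ε)
    · apply ContinuousOn.sub (Continuous.continuousOn (by continuity))
      apply ContinuousOn.log (by fun_prop)
      intro s hs
      have := hs.2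
      nlinarith
    · intro t ht
      rw [interior_Icc] at ht
      exact (hderiv t (by nlinarith [ht.2])).differentiableAt.differentiableWithinAt
    · intro t ht
      rw [interior_Icc] at ht
      have h1t : 0 < 1 - t := by nlinarith [ht.2]
      rw [(hderiv t h1t).deriv]
      have : 1 + t ≤ (1 - t)⁻¹ := by
        rw [inv_eq_one_div, le_div_iff₀ h1t]
        nlinarith [ht.1]
      linarith
  have h0' : (0 : ℝ) ∈ Set.Icc (0:ℝ) ε := ⟨le_rfl, h0⟩
  have hε' : ε ∈ Set.Icc (0:ℝ) ε := ⟨h0, le_rfl⟩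
  have := hmono h0' hε' h0
  simp only [hF] at this
  norm_num at this
  linarith

lemma md_entropy_le {ε : ℝ} (h0 : 0 ≤ ε) (h1 : ε < 1) :
    (1 + ε) / 2 * Real.log (1 + ε) + (1 - ε) / 2 * Real.log (1 - ε)
      ≤ ε ^ 2 / 2 + ε ^ 3 := by
  have hA := md_log_one_add_le h0
  have hB := md_log_one_sub_le h0 h1
  have h1' : (0:ℝ) ≤ (1 + ε) / 2 := by linarith
  have h2' : (0:ℝ) ≤ (1 - ε) / 2 := by linarith
  have hε4 : ε ^ 4 ≤ ε ^ 3 := by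
    calc ε ^ 4 = ε ^ 3 * ε := by ring
    _ ≤ ε ^ 3 * 1 := by exact mul_le_mul_of_nonneg_left h1.le (pow_nonneg h0 3)
    _ = ε ^ 3 := mul_one _
  nlinarith [mul_le_mul_of_nonneg_left hA h1', mul_le_mul_of_nonneg_left hB h2']

open Stirling in
lemma md_stirlingSeq_ge (n : ℕ) : Real.sqrt Real.pi ≤ stirlingSeq (n + 1) := by
  have h1 : Tendsto (stirlingSeq ∘ Nat.succ) atTop (nhds (Real.sqrt Real.pi)) :=
    tendsto_stirlingSeq_sqrt_pi.comp (tendsto_add_atTop_nat 1)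
  exact stirlingSeq'_antitone.le_of_tendsto h1 n

open Stirling in
lemma md_stirling_lower (n : ℕ) (hn : 1 ≤ n) :
    1 / 2 * Real.log (2 * n) + n * (Real.log n - 1) ≤ Real.log (Nat.factorial n) := by
  have hform := log_stirlingSeq_formula n
  have hlogn : Real.log ((n : ℝ) / Real.exp 1) = Real.log n - 1 := by
    rw [Real.log_div (by exact_mod_cast Nat.one_le_iff_ne_zero.mp hn) (Real.exp_ne_zero 1),
      Real.log_exp]
  have hge : Real.sqrt Real.pi ≤ stirlingSeq n := by
    obtain ⟨k, rfl⟩ := Nat.exists_eq_add_of_le hn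
    simpa [Nat.add_comm] using md_stirlingSeq_ge k
  have h1 : (1:ℝ) ≤ Real.sqrt Real.pi := by
    rw [show (1:ℝ) = Real.sqrt 1 by simp]
    exact Real.sqrt_le_sqrt (by linarith [Real.pi_gt_three])
  have hlog0 : 0 ≤ Real.log (stirlingSeq n) := Real.log_nonneg (le_trans h1 hge)
  rw [hlogn] at hform
  linarith

open Stirling in
lemma md_stirling_upper (n : ℕ) (hn : 1 ≤ n) :
    Real.log (Nat.factorial n) ≤ 1 + 1 / 2 * Real.log (2 * n) + n * (Real.log n - 1) := by
  have hform := log_stirlingSeq_formula n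
  have hlogn : Real.log ((n : ℝ) / Real.exp 1) = Real.log n - 1 := by
    rw [Real.log_div (by exact_mod_cast Nat.one_le_iff_ne_zero.mp hn) (Real.exp_ne_zero 1),
      Real.log_exp]
  have hle : stirlingSeq n ≤ stirlingSeq 1 := by
    obtain ⟨k, rfl⟩ := Nat.exists_eq_add_of_le hn
    have := stirlingSeq'_antitone (Nat.zero_le k)
    simpa [Nat.add_comm] using this
  have hpos : 0 < stirlingSeq n := by
    obtain ⟨k, rfl⟩ := Nat.exists_eq_add_of_le hn
    simpa [Nat.add_comm] using stirlingSeq'_pos k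
  have h1 : Real.log (stirlingSeq n) ≤ 1 := by
    calc Real.log (stirlingSeq n) ≤ Real.log (stirlingSeq 1) :=
          Real.log_le_log hpos hle
    _ = 1 - Real.log (Real.sqrt 2) := by
        rw [stirlingSeq_one, Real.log_div (Real.exp_ne_zero 1) (by positivity), Real.log_exp]
    _ ≤ 1 := by
        have : 0 ≤ Real.log (Real.sqrt 2) := Real.log_nonneg (by
          rw [show (1:ℝ) = Real.sqrt 1 by simp]
          exact Real.sqrt_le_sqrt one_le_two)
        linarith
  rw [hlogn] at hform
  linarith

lemma md_rpow_mul_self {y : ℝ} (hy : 0 < y) (a : ℝ) : y * y^a = y^(1+a) := by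
  rw [Real.rpow_add hy, Real.rpow_one]

lemma md_rpow_pow {y : ℝ} (hy : 0 ≤ y) (a : ℝ) (k : ℕ) : (y^a)^k = y^(a*(k:ℝ)) := by
  rw [← Real.rpow_natCast (y^a) k, ← Real.rpow_mul hy]


lemma md_choose_lower (m j : ℕ) (hj1 : 1 ≤ j) (hjm : j < m) (h2j : m ≤ 2 * j) :
    -((m:ℝ) * (((2*(j:ℝ) - m)/m)^2/2 + ((2*(j:ℝ) - m)/m)^3)) - Real.log (2*m) - 2
      ≤ Real.log (m.choose j) - m * Real.log 2 := by
  have hm0 : (0:ℝ) < m := by exact_mod_cast (Nat.pos_of_ne_zero (by omega))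
  have hj0 : (0:ℝ) < j := by exact_mod_cast hj1
  have hjm' : (j:ℝ) < m := by exact_mod_cast hjm
  have h2j' : (m:ℝ) ≤ 2*j := by exact_mod_cast h2j
  set ε : ℝ := (2*(j:ℝ) - m)/m with hε
  have h0ε : 0 ≤ ε := div_nonneg (by linarith) hm0.le
  have h1ε : ε < 1 := by rw [hε, div_lt_one hm0]; linarith
  have h1pε : (0:ℝ) < 1 + ε := by linarith
  have h1mε : (0:ℝ) < 1 - ε := by linarith
  have hb : ((m - j : ℕ):ℝ) = (m:ℝ) - j := by
    exact_mod_cast Nat.cast_sub hjm.le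
  have hb0 : (0:ℝ) < ((m - j : ℕ):ℝ) := by rw [hb]; linarith
  have ha' : (j:ℝ) = m * (1+ε)/2 := by rw [hε]; field_simp; ring
  have hb' : ((m - j : ℕ):ℝ) = m * (1-ε)/2 := by rw [hb, hε]; field_simp; ring
  have hla : Real.log (j:ℝ) = Real.log m + Real.log (1+ε) - Real.log 2 := by
    rw [ha', Real.log_div (by positivity) two_ne_zero, Real.log_mul hm0.ne' h1pε.ne']
  have hlb : Real.log ((m - j : ℕ):ℝ)
      = Real.log m + Real.log (1-ε) - Real.log 2 := by
    rw [hb', Real.log_div (by positivity) two_ne_zero, Real.log_mul hm0.ne' h1mε.ne']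
  have hfact : Real.log (m.choose j)
      = Real.log (Nat.factorial m) - Real.log (Nat.factorial j)
        - Real.log (Nat.factorial (m - j)) := by
    have h := Nat.choose_mul_factorial_mul_factorial hjm.le
    have h' : ((m.choose j : ℝ)) * (Nat.factorial j) * (Nat.factorial (m-j))
        = (Nat.factorial m : ℝ) := by exact_mod_cast congrArg (Nat.cast : ℕ → ℝ) h
    have hc0 : (0:ℝ) < (m.choose j : ℝ) := by
      exact_mod_cast Nat.choose_pos hjm.le
    have hf1 : (0:ℝ) < (Nat.factorial j : ℝ) := by exact_mod_cast Nat.factorial_pos j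
    have hf2 : (0:ℝ) < (Nat.factorial (m-j) : ℝ) := by exact_mod_cast Nat.factorial_pos (m-j)
    rw [← h', Real.log_mul (by positivity) hf2.ne', Real.log_mul hc0.ne' hf1.ne']
    ring
  have st_m := md_stirling_lower m (by omega)
  have st_j := md_stirling_upper j hj1
  have st_b := md_stirling_upper (m - j) (by omega)
  have hmono1 : Real.log (2*(j:ℝ)) ≤ Real.log (2*(m:ℝ)) :=
    Real.log_le_log (by positivity) (by linarith)
  have hmono2 : Real.log (2*((m - j : ℕ):ℝ)) ≤ Real.log (2*(m:ℝ)) :=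
    Real.log_le_log (by positivity) (by rw [hb]; linarith)
  have hlog2m0 : 0 ≤ Real.log (2*(m:ℝ)) := Real.log_nonneg (by
    have : (1:ℝ) ≤ m := by exact_mod_cast (Nat.pos_of_ne_zero (by omega))
    linarith)
  have hID : (m:ℝ) * Real.log m - (j:ℝ) * Real.log (j:ℝ)
      - ((m - j : ℕ):ℝ) * Real.log ((m - j : ℕ):ℝ) - m * Real.log 2
      = -((m:ℝ) * ((1+ε)/2 * Real.log (1+ε) + (1-ε)/2 * Real.log (1-ε))) := by
    rw [hla, hlb, ha', hb']; ring
  have hent := md_entropy_le h0ε h1ε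
  have hentm := mul_le_mul_of_nonneg_left hent hm0.le
  have hab : (j:ℝ) + ((m - j : ℕ):ℝ) = (m:ℝ) := by rw [hb]; ring
  linarith [hfact, st_m, st_j, st_b, hID, hentm, hmono1, hmono2, hlog2m0, hab]

lemma md_prob_eq_ge {Ω : Type*} [MeasurableSpace Ω] (P : Measure Ω)
    (X : ℕ → Ω → ℤ) (hmeas : ∀ i, Measurable (X i))
    (hindep : iIndepFun X P)
    (hone : ∀ i, P {ω | X i ω = 1} = 1 / 2)
    (hmone : ∀ i, P {ω | X i ω = -1} = 1 / 2)
    (m j : ℕ) :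
    (m.choose j : ℝ≥0∞) * (1/2)^m
      ≤ P {ω | (∑ i ∈ Finset.range m, X i ω) = 2*(j:ℤ) - m} := by
  classical
  set A : Finset ℕ → Set Ω :=
    fun s => ⋂ i ∈ Finset.range m, X i ⁻¹' {if i ∈ s then (1:ℤ) else -1} with hA
  have hAmeas : ∀ s, MeasurableSet (A s) := fun s =>
    Finset.measurableSet_biInter _ (fun i _ => hmeas i (measurableSet_singleton _))
  have hPA : ∀ s : Finset ℕ, P (A s) = (1/2)^m := by
    intro s
    rw [hA]
    rw [hindep.measure_inter_preimage_eq_mul (Finset.range m)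
      (fun i _ => measurableSet_singleton _)]
    have heach : ∀ i ∈ Finset.range m,
        P (X i ⁻¹' {if i ∈ s then (1:ℤ) else -1}) = 1/2 := by
      intro i _
      by_cases hi : i ∈ s
      · simp only [hi, if_true]
        have hset : X i ⁻¹' {(1:ℤ)} = {ω | X i ω = 1} := by ext ω; simp
        rw [hset, hone i]
      · simp only [hi, if_false]
        have hset : X i ⁻¹' {(-1:ℤ)} = {ω | X i ω = -1} := by ext ω; simp
        rw [hset, hmone i]
    rw [Finset.prod_congr rfl heach, Finset.prod_const, Finset.card_range]
  have hsub : ∀ s ∈ Finset.powersetCard j (Finset.range m),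
      A s ⊆ {ω | (∑ i ∈ Finset.range m, X i ω) = 2*(j:ℤ) - m} := by
    intro s hs ω hω
    obtain ⟨hs1, hs2⟩ := Finset.mem_powersetCard.mp hs
    simp only [hA, Set.mem_iInter, Set.mem_preimage, Set.mem_singleton_iff] at hω
    show (∑ i ∈ Finset.range m, X i ω) = 2*(j:ℤ) - m
    calc (∑ i ∈ Finset.range m, X i ω)
        = ∑ i ∈ Finset.range m, (if i ∈ s then (1:ℤ) else -1) :=
          Finset.sum_congr rfl (fun i hi => hω i hi)
      _ = ∑ i ∈ Finset.range m, (2 * (if i ∈ s then (1:ℤ) else 0) - 1) :=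
          Finset.sum_congr rfl (fun i _ => by split <;> ring)
      _ = 2 * (∑ i ∈ Finset.range m, if i ∈ s then (1:ℤ) else 0) - m := by
          rw [Finset.sum_sub_distrib, ← Finset.mul_sum, Finset.sum_const, Finset.card_range]
          push_cast; ring
      _ = 2*(j:ℤ) - m := by
          rw [Finset.sum_ite_mem, Finset.inter_eq_right.mpr hs1, Finset.sum_const, hs2]
          push_cast; ring
  have hdisj : (↑(Finset.powersetCard j (Finset.range m)) : Set (Finset ℕ)).PairwiseDisjoint A := by
    intro s hs t ht hst
    refine Set.disjoint_left.mpr ?_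
    intro ω hωs hωt
    simp only [Finset.mem_coe, Finset.mem_powersetCard] at hs ht
    have hne : ¬ (∀ i, i ∈ s ↔ i ∈ t) := fun h => hst (Finset.ext h)
    push_neg at hne
    obtain ⟨i, hi⟩ := hne
    simp only [hA, Set.mem_iInter, Set.mem_preimage, Set.mem_singleton_iff] at hωs hωt
    have him : i ∈ Finset.range m := by
      by_cases h1 : i ∈ s
      · exact hs.1 h1
      · have h2 : i ∈ t := by tauto
        exact ht.1 h2
    have h1 := hωs i him
    have h2 := hωt i him
    by_cases hs' : i ∈ s <;> by_cases ht' : i ∈ t <;> simp [hs', ht'] at h1 h2 hi <;> omega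
  calc (m.choose j : ℝ≥0∞) * (1/2)^m
      = ∑ s ∈ Finset.powersetCard j (Finset.range m), P (A s) := by
        rw [Finset.sum_congr rfl (fun s _ => hPA s), Finset.sum_const,
          Finset.card_powersetCard, Finset.card_range, nsmul_eq_mul]
    _ = P (⋃ s ∈ Finset.powersetCard j (Finset.range m), A s) :=
        (measure_biUnion_finset hdisj fun s _ => hAmeas s).symm
    _ ≤ P {ω | (∑ i ∈ Finset.range m, X i ω) = 2*(j:ℤ) - m} :=
        measure_mono (Set.iUnion₂_subset hsub)

lemma md_mgf_single {Ω : Type*} [MeasurableSpace Ω] (P : Measure Ω) [IsProbabilityMeasure P]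
    (X : ℕ → Ω → ℤ) (hmeas : ∀ i, Measurable (X i))
    (hone : ∀ i, P {ω | X i ω = 1} = 1 / 2)
    (hmone : ∀ i, P {ω | X i ω = -1} = 1 / 2)
    (i : ℕ) (l : ℝ) :
    mgf (fun ω => ((X i ω : ℤ) : ℝ)) P l = Real.cosh l := by
  set T1 : Set Ω := {ω | X i ω = 1} with hT1def
  set T2 : Set Ω := {ω | X i ω = -1} with hT2def
  have hT1 : MeasurableSet T1 := hmeas i (measurableSet_singleton 1)
  have hT2 : MeasurableSet T2 := hmeas i (measurableSet_singleton (-1))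
  have hdisj : Disjoint T1 T2 := by
    rw [Set.disjoint_left]
    intro ω h1 h2
    simp only [hT1def, hT2def, Set.mem_setOf_eq] at h1 h2
    omega
  have hfull : P (T1 ∪ T2) = 1 := by
    rw [measure_union hdisj hT2, hone i, hmone i]
    exact ENNReal.add_halves 1
  have hcompl : P (T1 ∪ T2)ᶜ = 0 :=
    (prob_compl_eq_zero_iff (hT1.union hT2)).mpr hfull
  set g : Ω → ℝ := T1.indicator (fun _ => Real.exp l) + T2.indicator (fun _ => Real.exp (-l))
    with hg
  have hae : (fun ω => Real.exp (l * ((X i ω : ℤ) : ℝ))) =ᵐ[P] g := by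
    rw [Filter.EventuallyEq, ae_iff]
    refine measure_mono_null (fun ω hω => ?_) hcompl
    simp only [Set.mem_setOf_eq] at hω
    simp only [Set.mem_compl_iff, Set.mem_union]
    intro hmem
    apply hω
    rcases hmem with h1 | h2
    · have hx : X i ω = 1 := h1
      have h2' : ω ∉ T2 := by
        simp only [hT2def, Set.mem_setOf_eq]; omega
      simp [hg, Set.indicator_of_mem h1, Set.indicator_of_notMem h2', hx]
    · have hx : X i ω = -1 := h2
      have h1' : ω ∉ T1 := by
        simp only [hT1def, Set.mem_setOf_eq]; omega
      simp [hg, Set.indicator_of_mem h2, Set.indicator_of_notMem h1', hx]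
  have htoReal : (P T1).toReal = 1/2 ∧ (P T2).toReal = 1/2 := by
    constructor
    · rw [hone i]; simp [ENNReal.toReal_div]
    · rw [hmone i]; simp [ENNReal.toReal_div]
  rw [mgf, integral_congr_ae hae, hg]
  simp only [Pi.add_apply]
  rw [integral_add ((integrable_const _).indicator hT1) ((integrable_const _).indicator hT2),
    integral_indicator_const _ hT1, integral_indicator_const _ hT2, measureReal_def, measureReal_def,
    htoReal.1, htoReal.2, Real.cosh_eq]
  simp; ring


lemma md_tail_le {Ω : Type*} [MeasurableSpace Ω] (P : Measure Ω) [IsProbabilityMeasure P]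
    (X : ℕ → Ω → ℤ) (hmeas : ∀ i, Measurable (X i))
    (hindep : iIndepFun X P)
    (hone : ∀ i, P {ω | X i ω = 1} = 1 / 2)
    (hmone : ∀ i, P {ω | X i ω = -1} = 1 / 2)
    (m : ℕ) (hm : 1 ≤ m) (t : ℝ) (ht : 0 ≤ t) :
    (P {ω | t ≤ ((∑ i ∈ Finset.range m, X i ω : ℤ) : ℝ)}).toReal
      ≤ Real.exp (-(t^2) / (2*m)) := by
  have hm0 : (0:ℝ) < m := by exact_mod_cast hm
  set Y : ℕ → Ω → ℝ := fun i ω => ((X i ω : ℤ) : ℝ) with hY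
  have hYmeas : ∀ i, Measurable (Y i) := fun i => measurable_from_top.comp (hmeas i)
  have hYindep : iIndepFun Y P :=
    hindep.comp (fun _ => (Int.cast : ℤ → ℝ)) (fun _ => measurable_from_top)
  set l : ℝ := t / m with hl
  have hl0 : 0 ≤ l := div_nonneg ht hm0.le
  set S : Ω → ℝ := ∑ i ∈ Finset.range m, Y i with hS
  have hSval : ∀ ω, S ω = ((∑ i ∈ Finset.range m, X i ω : ℤ) : ℝ) := by
    intro ω
    rw [hS, Finset.sum_apply]
    push_cast
    rfl
  have hSmeas : Measurable S := by
    rw [hS]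
    have hms : Measurable (fun ω => ∑ i ∈ Finset.range m, Y i ω) :=
      Finset.measurable_sum _ (fun i _ => hYmeas i)
    convert hms using 1
    ext ω
    simp [Finset.sum_apply]
  have hcompl : P (⋃ i ∈ Finset.range m, ({ω | X i ω = 1} ∪ {ω | X i ω = -1})ᶜ) = 0 := by
    refine (measure_biUnion_null_iff (Finset.countable_toSet _)).mpr (fun i _ => ?_)
    have hdisj : Disjoint {ω | X i ω = 1} {ω | X i ω = -1} := by
      rw [Set.disjoint_left]
      intro ω h1 h2
      simp only [Set.mem_setOf_eq] at h1 h2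
      omega
    have hfull : P ({ω | X i ω = 1} ∪ {ω | X i ω = -1}) = 1 := by
      rw [measure_union hdisj (hmeas i (measurableSet_singleton (-1))), hone i, hmone i]
      exact ENNReal.add_halves 1
    exact (prob_compl_eq_zero_iff
      ((hmeas i (measurableSet_singleton 1)).union (hmeas i (measurableSet_singleton (-1))))).mpr
      hfull
  have hbound : ∀ᵐ ω ∂P, ‖Real.exp (l * S ω)‖ ≤ Real.exp (|l| * m) := by
    rw [ae_iff]
    refine measure_mono_null (fun ω hω => ?_) hcompl
    simp only [Set.mem_setOf_eq, not_le] at hω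
    simp only [Set.mem_iUnion, Set.mem_compl_iff, Set.mem_union, Set.mem_setOf_eq]
    by_contra hcon
    push_neg at hcon
    have habs : |S ω| ≤ (m:ℝ) := by
      rw [hS, Finset.sum_apply]
      calc |∑ i ∈ Finset.range m, Y i ω| ≤ ∑ i ∈ Finset.range m, |Y i ω| :=
            Finset.abs_sum_le_sum_abs _ _
        _ ≤ ∑ _i ∈ Finset.range m, (1:ℝ) := by
            refine Finset.sum_le_sum (fun i hi => ?_)
            rcases hcon i hi with h | h <;> simp [hY, h]
        _ = m := by simp
    have : l * S ω ≤ |l| * m := by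
      calc l * S ω ≤ |l * S ω| := le_abs_self _
        _ = |l| * |S ω| := abs_mul _ _
        _ ≤ |l| * m := by
            exact mul_le_mul_of_nonneg_left habs (abs_nonneg l)
    have h2 : Real.exp (l * S ω) ≤ Real.exp (|l| * m) := Real.exp_le_exp.mpr this
    rw [Real.norm_eq_abs, abs_of_pos (Real.exp_pos _)] at hω
    linarith
  have hint : Integrable (fun ω => Real.exp (l * S ω)) P :=
    Integrable.mono' (integrable_const _)
      ((hSmeas.const_mul l).exp.aestronglyMeasurable) hbound
  have hchern := measure_ge_le_exp_mul_mgf (X := S) (μ := P) t hl0 hint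
  have hmgf : mgf S P l = Real.cosh l ^ m := by
    rw [hS, hYindep.mgf_sum hYmeas (Finset.range m)]
    rw [Finset.prod_congr rfl (fun i _ => md_mgf_single P X hmeas hone hmone i l),
      Finset.prod_const, Finset.card_range]
  have hcosh : Real.cosh l ^ m ≤ Real.exp ((m:ℝ) * (l^2/2)) := by
    rw [Real.exp_nat_mul]
    exact pow_le_pow_left₀ (Real.cosh_pos l).le (Real.cosh_le_exp_half_sq l) m
  have hsetEq : {ω | t ≤ ((∑ i ∈ Finset.range m, X i ω : ℤ) : ℝ)} = {ω | t ≤ S ω} := by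
    ext ω
    simp only [Set.mem_setOf_eq, hSval ω]
  have hfinal : Real.exp (-l * t) * Real.exp ((m:ℝ) * (l^2/2))
      = Real.exp (-(t^2) / (2*m)) := by
    rw [← Real.exp_add]
    congr 1
    rw [hl]
    field_simp
    ring
  calc (P {ω | t ≤ ((∑ i ∈ Finset.range m, X i ω : ℤ) : ℝ)}).toReal
      = (P {ω | t ≤ S ω}).toReal := by rw [hsetEq]
    _ ≤ Real.exp (-l * t) * mgf S P l := hchern
    _ ≤ Real.exp (-l * t) * Real.exp ((m:ℝ) * (l^2/2)) := by
        rw [hmgf]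
        exact mul_le_mul_of_nonneg_left hcosh (Real.exp_pos _).le
    _ = Real.exp (-(t^2) / (2*m)) := hfinal

open scoped Topology in
set_option maxHeartbeats 1000000 in
/-- (Theorem 1, after [EL03]) Let `S_m = X_1 + ⋯ + X_m` be a simple symmetric random walk
started at `0` (the `X i` i.i.d. taking values `±1` with probability `1/2` each). Fix a
real `x > 0` and `1/2 < α < 1`. Then
`lim_{m→∞} m^(1-2α) · log P(S_m > x·m^α) = -x²/2`. -/
theorem ssrw_moderate_deviations
    {Ω : Type*} [MeasurableSpace Ω] (P : Measure Ω) [IsProbabilityMeasure P]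
    (X : ℕ → Ω → ℤ)
    (hmeas : ∀ i, Measurable (X i))
    (hindep : iIndepFun X P)
    (hone : ∀ i, P {ω | X i ω = 1} = 1 / 2)
    (hmone : ∀ i, P {ω | X i ω = -1} = 1 / 2)
    (x : ℝ) (hx : 0 < x) (α : ℝ) (hα : 1 / 2 < α) (hα1 : α < 1) :
    Tendsto
      (fun m : ℕ => (m : ℝ) ^ (1 - 2 * α) *
        Real.log (P {ω | x * (m : ℝ) ^ α < ((∑ i ∈ Finset.range m, X i ω : ℤ) : ℝ)}).toReal)
      atTop (nhds (-x ^ 2 / 2)) := by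
  have hα0 : (0:ℝ) < α := by linarith
  have hα2 : (0:ℝ) < 2*α - 1 := by linarith
  have hα3 : (0:ℝ) < 1 - α := by linarith
  set p : ℕ → ℝ := fun m =>
    (P {ω | x * (m : ℝ) ^ α < ((∑ i ∈ Finset.range m, X i ω : ℤ) : ℝ)}).toReal with hp
  set w : ℕ → ℝ := fun m => x + 2 * (m:ℝ) ^ (-α) with hw
  set L : ℕ → ℝ := fun m =>
    -((w m)^2/2 + (w m)^3 * (m:ℝ)^(α-1)
      + ((m:ℝ)^(1-2*α) * Real.log (2*(m:ℝ)) + (m:ℝ)^(1-2*α) * 2)) with hL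
  have hcast : Tendsto (Nat.cast : ℕ → ℝ) atTop atTop := tendsto_natCast_atTop_atTop
  -- eventual condition
  have hev : ∀ᶠ m : ℕ in atTop, 1 ≤ m ∧ x * (m:ℝ)^α + 2 < m := by
    have ht1 : Tendsto (fun m : ℕ => x * (m:ℝ)^(α-1) + 2*((m:ℝ))⁻¹) atTop (𝓝 (x*0 + 2*0)) := by
      apply Tendsto.add
      · apply Tendsto.const_mul
        have he : α - 1 = -(1-α) := by ring
        rw [he]
        exact (tendsto_rpow_neg_atTop hα3).comp hcast
      · exact Tendsto.const_mul _ (tendsto_inv_atTop_zero.comp hcast)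
    rw [show x*0+2*0 = (0:ℝ) by ring] at ht1
    have ht2 : ∀ᶠ m : ℕ in atTop, x * (m:ℝ)^(α-1) + 2*((m:ℝ))⁻¹ < 1 :=
      ht1.eventually_lt_const one_pos
    filter_upwards [ht2, eventually_ge_atTop 1] with m h1 h2
    refine ⟨h2, ?_⟩
    have hm0 : (0:ℝ) < m := by exact_mod_cast h2
    have eA : (m:ℝ) * (m:ℝ)^(α-1) = (m:ℝ)^α := by
      rw [md_rpow_mul_self hm0, show (1:ℝ)+(α-1) = α by ring]
    have := mul_lt_mul_of_pos_left h1 hm0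
    calc x * (m:ℝ)^α + 2 = (m:ℝ) * (x * (m:ℝ)^(α-1) + 2*((m:ℝ))⁻¹) := by
          linear_combination (-x) * eA + (-2) * (mul_inv_cancel₀ hm0.ne')
      _ < (m:ℝ) * 1 := this
      _ = (m:ℝ) := mul_one _
  -- main eventual bounds
  have hmain : ∀ᶠ m : ℕ in atTop,
      L m ≤ (m:ℝ)^(1-2*α) * Real.log (p m) ∧
      (m:ℝ)^(1-2*α) * Real.log (p m) ≤ -x^2/2 := by
    filter_upwards [hev] with m hm
    obtain ⟨hm1, hcond⟩ := hm
    have hm0 : (0:ℝ) < m := by exact_mod_cast hm1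
    have hrpow_pos : ∀ a : ℝ, (0:ℝ) < (m:ℝ)^a := fun a => Real.rpow_pos_of_pos hm0 a
    have hrp : ∀ a b : ℝ, (m:ℝ)^a * (m:ℝ)^b = (m:ℝ)^(a+b) :=
      fun a b => (Real.rpow_add hm0 a b).symm
    have eA : (m:ℝ) * (m:ℝ)^(α-1) = (m:ℝ)^α := by
      rw [md_rpow_mul_self hm0, show (1:ℝ)+(α-1) = α by ring]
    have eB : (m:ℝ)^(α-1) * (m:ℝ)^(-α) * (m:ℝ) = 1 := by
      rw [hrp, mul_comm, md_rpow_mul_self hm0,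
        show (1:ℝ)+(α-1+-α) = 0 by ring, Real.rpow_zero]
    have E2 : (m:ℝ)^(1-2*α) * (m:ℝ) * ((m:ℝ)^(α-1))^2 = 1 := by
      calc (m:ℝ)^(1-2*α) * (m:ℝ) * ((m:ℝ)^(α-1))^2
          = (m:ℝ)^(1-2*α) * ((m:ℝ) * (m:ℝ)^((α-1)*((2:ℕ):ℝ))) := by
            rw [md_rpow_pow hm0.le]; ring
        _ = (m:ℝ)^(1-2*α) * (m:ℝ)^(1+(α-1)*((2:ℕ):ℝ)) := by rw [md_rpow_mul_self hm0]
        _ = (m:ℝ)^(1-2*α+(1+(α-1)*((2:ℕ):ℝ))) := hrp _ _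
        _ = 1 := by
            rw [show 1-2*α+(1+(α-1)*((2:ℕ):ℝ)) = 0 by push_cast; ring, Real.rpow_zero]
    have E3 : (m:ℝ)^(1-2*α) * (m:ℝ) * ((m:ℝ)^(α-1))^3 = (m:ℝ)^(α-1) := by
      calc (m:ℝ)^(1-2*α) * (m:ℝ) * ((m:ℝ)^(α-1))^3
          = (m:ℝ)^(1-2*α) * ((m:ℝ) * (m:ℝ)^((α-1)*((3:ℕ):ℝ))) := by
            rw [md_rpow_pow hm0.le]; ring
        _ = (m:ℝ)^(1-2*α) * (m:ℝ)^(1+(α-1)*((3:ℕ):ℝ)) := by rw [md_rpow_mul_self hm0]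
        _ = (m:ℝ)^(1-2*α+(1+(α-1)*((3:ℕ):ℝ))) := hrp _ _
        _ = (m:ℝ)^(α-1) := by
            congr 1
            push_cast; ring
    have E4 : (m:ℝ)^(1-2*α) * ((m:ℝ)^α)^2 = (m:ℝ) := by
      calc (m:ℝ)^(1-2*α) * ((m:ℝ)^α)^2
          = (m:ℝ)^(1-2*α) * (m:ℝ)^(α*((2:ℕ):ℝ)) := by rw [md_rpow_pow hm0.le]
        _ = (m:ℝ)^(1-2*α+α*((2:ℕ):ℝ)) := hrp _ _
        _ = (m:ℝ) := by
            rw [show 1-2*α+α*((2:ℕ):ℝ) = 1 by push_cast; ring, Real.rpow_one]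
    -- choose j
    set u : ℝ := ((m:ℝ) + x*(m:ℝ)^α)/2 with hu
    have hu0 : 0 ≤ u := by
      rw [hu]
      have := (hrpow_pos α).le
      have : 0 ≤ x*(m:ℝ)^α := by positivity
      linarith
    set j : ℕ := Nat.floor u + 1 with hj
    have hjcast : (j:ℝ) = (Nat.floor u : ℝ) + 1 := by rw [hj]; push_cast; ring
    have hjlow : (m:ℝ) + x*(m:ℝ)^α < 2*(j:ℝ) := by
      have h := Nat.lt_floor_add_one u
      rw [hjcast, hu] at *
      linarith
    have hjhigh : 2*(j:ℝ) ≤ (m:ℝ) + x*(m:ℝ)^α + 2 := by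
      have h := Nat.floor_le hu0
      rw [hjcast, hu] at *
      linarith
    have hxma : 0 < x*(m:ℝ)^α := mul_pos hx (hrpow_pos α)
    have hjm : j < m := by
      have : (j:ℝ) < m := by linarith
      exact_mod_cast this
    have h2j : m ≤ 2*j := by
      have : (m:ℝ) ≤ 2*(j:ℝ) := by linarith
      exact_mod_cast (by push_cast; linarith : (m:ℝ) ≤ ((2*j : ℕ):ℝ))
    have hj1 : 1 ≤ j := by omega
    set K : ℝ := 2*(j:ℝ) - m with hK
    have hK0 : x*(m:ℝ)^α < K := by rw [hK]; linarith
    have hK2 : K ≤ x*(m:ℝ)^α + 2 := by rw [hK]; linarith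
    have hKpos : 0 < K := lt_trans hxma hK0
    -- lower bound on p m
    have hsub : {ω | (∑ i ∈ Finset.range m, X i ω) = 2*(j:ℤ) - m}
        ⊆ {ω | x * (m : ℝ) ^ α < ((∑ i ∈ Finset.range m, X i ω : ℤ) : ℝ)} := by
      intro ω hω
      simp only [Set.mem_setOf_eq] at hω ⊢
      rw [hω]
      have hcastK : ((2*(j:ℤ) - m : ℤ) : ℝ) = K := by rw [hK]; push_cast; ring
      rw [hcastK]
      exact hK0
    have hprob := le_trans (md_prob_eq_ge P X hmeas hindep hone hmone m j) (measure_mono hsub)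
    have hlowreal : (m.choose j : ℝ) * (1/2)^m ≤ p m := by
      have h1 : ((m.choose j : ℝ≥0∞) * (1/2)^m).toReal = (m.choose j : ℝ) * (1/2)^m := by
        rw [ENNReal.toReal_mul, ENNReal.toReal_pow]
        simp
      rw [hp, ← h1]
      exact ENNReal.toReal_mono (measure_ne_top P _) hprob
    have hchoosepos : (0:ℝ) < (m.choose j : ℝ) * (1/2)^m := by
      have : 0 < m.choose j := Nat.choose_pos hjm.le
      positivity
    have hppos : 0 < p m := lt_of_lt_of_le hchoosepos hlowreal
    have hlogp_low : Real.log ((m.choose j : ℝ)) - m * Real.log 2 ≤ Real.log (p m) := by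
      have h1 := Real.log_le_log hchoosepos hlowreal
      rw [Real.log_mul (Nat.cast_ne_zero.mpr (Nat.choose_pos hjm.le).ne') (by positivity),
        Real.log_pow, one_div, Real.log_inv] at h1
      push_cast at h1
      linarith
    have hchb := md_choose_lower m j hj1 hjm h2j
    set ε : ℝ := K / m with hε
    have hchb' : -((m:ℝ) * (ε^2/2 + ε^3)) - Real.log (2*m) - 2
        ≤ Real.log (m.choose j) - m * Real.log 2 := by rw [hε, hK]; exact hchb
    have hε0 : 0 ≤ ε := le_of_lt (div_pos hKpos hm0)
    have hwpos : 0 < w m := by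
      have h1 : (0:ℝ) < (m:ℝ)^(-α) := hrpow_pos _
      have hwm : w m = x + 2*(m:ℝ)^(-α) := rfl
      rw [hwm]
      linarith
    have hεle : ε ≤ (m:ℝ)^(α-1) * w m := by
      rw [hε, div_le_iff₀ hm0]
      calc K ≤ x*(m:ℝ)^α + 2 := hK2
        _ = (m:ℝ)^(α-1) * w m * m := by
            rw [hw]
            linear_combination (-x) * eA + (-2) * eB
    -- lower bound chain
    have hlog2m : -((m:ℝ)*(ε^2/2 + ε^3)) - Real.log (2*m) - 2 ≤ Real.log (p m) := by
      linarith
    have hcmpos : (0:ℝ) ≤ (m:ℝ)^(1-2*α) := (hrpow_pos _).le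
    constructor
    · -- lower bound
      have hmul := mul_le_mul_of_nonneg_left hlog2m hcmpos
      have hterm1 : (m:ℝ)^(1-2*α) * ((m:ℝ) * (ε^2/2)) ≤ (w m)^2/2 := by
        have hε2 : ε^2 ≤ ((m:ℝ)^(α-1) * w m)^2 := pow_le_pow_left₀ hε0 hεle 2
        calc (m:ℝ)^(1-2*α) * ((m:ℝ) * (ε^2/2))
            ≤ (m:ℝ)^(1-2*α) * ((m:ℝ) * (((m:ℝ)^(α-1) * w m)^2/2)) := by
              have h1 : ε^2/2 ≤ ((m:ℝ)^(α-1) * w m)^2/2 :=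
                (div_le_div_iff_of_pos_right (by norm_num : (0:ℝ) < 2)).mpr hε2
              exact mul_le_mul_of_nonneg_left
                (mul_le_mul_of_nonneg_left h1 hm0.le) hcmpos
          _ = (w m)^2/2 := by
              rw [mul_pow]
              linear_combination ((w m)^2/2) * E2
      have hterm2 : (m:ℝ)^(1-2*α) * ((m:ℝ) * ε^3) ≤ (w m)^3 * (m:ℝ)^(α-1) := by
        have hε3 : ε^3 ≤ ((m:ℝ)^(α-1) * w m)^3 := pow_le_pow_left₀ hε0 hεle 3
        calc (m:ℝ)^(1-2*α) * ((m:ℝ) * ε^3)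
            ≤ (m:ℝ)^(1-2*α) * ((m:ℝ) * ((m:ℝ)^(α-1) * w m)^3) :=
              mul_le_mul_of_nonneg_left
                (mul_le_mul_of_nonneg_left hε3 hm0.le) hcmpos
          _ = (w m)^3 * (m:ℝ)^(α-1) := by
              rw [mul_pow]
              linear_combination ((w m)^3) * E3
      rw [hL]
      have hexpand : (m:ℝ)^(1-2*α) * (-((m:ℝ)*(ε^2/2 + ε^3)) - Real.log (2*m) - 2)
          = -((m:ℝ)^(1-2*α) * ((m:ℝ) * (ε^2/2)) + (m:ℝ)^(1-2*α) * ((m:ℝ) * ε^3)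
            + ((m:ℝ)^(1-2*α) * Real.log (2*(m:ℝ)) + (m:ℝ)^(1-2*α) * 2)) := by ring
      rw [hexpand] at hmul
      have hfin := neg_le_neg (add_le_add (add_le_add hterm1 hterm2) (le_refl
        ((m:ℝ)^(1-2*α) * Real.log (2*(m:ℝ)) + (m:ℝ)^(1-2*α) * 2)))
      exact le_trans hfin hmul
    · -- upper bound
      have htail := md_tail_le P X hmeas hindep hone hmone m hm1 (x*(m:ℝ)^α) hxma.le
      have hsub2 : {ω | x * (m : ℝ) ^ α < ((∑ i ∈ Finset.range m, X i ω : ℤ) : ℝ)}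
          ⊆ {ω | x * (m : ℝ) ^ α ≤ ((∑ i ∈ Finset.range m, X i ω : ℤ) : ℝ)} := by
        intro ω hω
        simp only [Set.mem_setOf_eq] at hω ⊢
        exact hω.le
      have hple : p m ≤ Real.exp (-((x*(m:ℝ)^α)^2) / (2*m)) := by
        refine le_trans ?_ htail
        exact ENNReal.toReal_mono (measure_ne_top P _) (measure_mono hsub2)
      have hlogle : Real.log (p m) ≤ -((x*(m:ℝ)^α)^2) / (2*m) := by
        calc Real.log (p m) ≤ Real.log (Real.exp (-((x*(m:ℝ)^α)^2) / (2*m))) :=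
              Real.log_le_log hppos hple
          _ = -((x*(m:ℝ)^α)^2) / (2*m) := Real.log_exp _
      have hmulu := mul_le_mul_of_nonneg_left hlogle hcmpos
      have hid : (m:ℝ)^(1-2*α) * (-((x*(m:ℝ)^α)^2) / (2*m)) = -x^2/2 := by
        rw [mul_pow]
        field_simp
        linear_combination (-1) * E4
      rw [hid] at hmulu
      exact hmulu
  -- limit of L
  have hLlim : Tendsto L atTop (𝓝 (-x^2/2)) := by
    have hma : Tendsto (fun m : ℕ => (m:ℝ)^(-α)) atTop (𝓝 0) :=
      (tendsto_rpow_neg_atTop hα0).comp hcast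
    have hwlim : Tendsto w atTop (𝓝 x) := by
      have h : Tendsto (fun m : ℕ => x + 2 * (m:ℝ)^(-α)) atTop (𝓝 (x + 2*0)) :=
        tendsto_const_nhds.add (hma.const_mul 2)
      rw [hw]
      simpa using h
    have hma1 : Tendsto (fun m : ℕ => (m:ℝ)^(α-1)) atTop (𝓝 0) := by
      have he : α - 1 = -(1-α) := by ring
      rw [he]
      exact (tendsto_rpow_neg_atTop hα3).comp hcast
    have hm2a : Tendsto (fun m : ℕ => (m:ℝ)^(1-2*α)) atTop (𝓝 0) := by
      have he : 1 - 2*α = -(2*α-1) := by ring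
      rw [he]
      exact (tendsto_rpow_neg_atTop hα2).comp hcast
    have hlogterm : Tendsto (fun m : ℕ => (m:ℝ)^(1-2*α) * Real.log (2*(m:ℝ))) atTop (𝓝 0) := by
      have hsplit : (fun m : ℕ => (m:ℝ)^(1-2*α) * Real.log (2*(m:ℝ)))
          =ᶠ[atTop] (fun m : ℕ => (m:ℝ)^(1-2*α) * Real.log 2
            + Real.log (m:ℝ) / (m:ℝ)^(2*α-1)) := by
        filter_upwards [eventually_ge_atTop 1] with m hm1
        have hm0 : (0:ℝ) < m := by exact_mod_cast hm1
        rw [Real.log_mul two_ne_zero hm0.ne']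
        rw [show (1:ℝ)-2*α = -(2*α-1) by ring, Real.rpow_neg hm0.le, div_eq_inv_mul]
        ring
      have h1 : Tendsto (fun m : ℕ => (m:ℝ)^(1-2*α) * Real.log 2) atTop (𝓝 (0 * Real.log 2)) :=
        hm2a.mul_const _
      have h2 : Tendsto (fun m : ℕ => Real.log (m:ℝ) / (m:ℝ)^(2*α-1)) atTop (𝓝 0) :=
        ((isLittleO_log_rpow_atTop hα2).tendsto_div_nhds_zero).comp hcast
      apply Tendsto.congr' hsplit.symm
      simpa using h1.add h2
    have hfinal : Tendsto L atTop (𝓝 (-(x^2/2 + x^3 * 0 + (0 + 0*2)))) := by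
      rw [hL]
      apply Tendsto.neg
      apply Tendsto.add
      apply Tendsto.add
      · simpa using ((hwlim.pow 2).div_const 2)
      · exact (hwlim.pow 3).mul hma1
      · exact hlogterm.add (hm2a.mul_const 2)
    have hval : -x^2/2 = -(x^2/2 + x^3 * 0 + (0 + 0*2)) := by ring
    rw [hval]
    exact hfinal
  exact tendsto_of_tendsto_of_tendsto_of_le_of_le' hLlim tendsto_const_nhds
    (hmain.mono fun m h => h.1) (hmain.mono fun m h => h.2)
end

section
/- (Main inequality) Let n ≥ 2 and m ≥ 1 be integers and let α be a real number with 1/2 < α ≤ 1 such that 2·m^α is an integer and 2·m^α < n (here m^α denotes a real power). Let a and b be independent random variables, each uniformly distributed on the integers {1, 2, …, n}, let S_m and S'_m be two simple symmetric random walks of m steps started at 0, with a, b and the two walks mutually independent, and set A = a + S_m, B = b + S'_m. Then the conditional probability P(a < b | A < B) satisfies P(a < b | A < B) ≥ (1 − exp(−m^{2α−1}/2))² · ((n − 2m^α + 1)(n − 2m^α)/(n² − n)) · (1 − 1/n). -/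
open MeasureTheory ProbabilityTheory
open scoped ENNReal

open Finset

namespace MillionairesAux

def sgn (s : Bool) : ℤ := if s then 1 else -1

def wsum {m : ℕ} (v : Fin m → Bool) : ℤ := ∑ r, sgn (v r)

lemma sgn_injective : Function.Injective sgn := by
  intro s s'; cases s <;> cases s' <;> simp [sgn]

lemma wsum_not {m : ℕ} (v : Fin m → Bool) : wsum (fun r => !(v r)) = - wsum v := by
  simp only [wsum, ← Finset.sum_neg_distrib]
  refine Finset.sum_congr rfl fun r _ => ?_
  cases hv : v r <;> simp [sgn]

/-- Chernoff-type counting bound for the number of ±1 vectors with large sum. -/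
lemma chernoff (m : ℕ) (hm : 1 ≤ m) (c : ℝ) (hc : 0 < c) :
    (((univ : Finset (Fin m → Bool)).filter fun v => c ≤ (wsum v : ℝ)).card : ℝ)
      ≤ 2 ^ m * Real.exp (-c ^ 2 / (2 * m)) := by
  have hm0 : (0:ℝ) < m := by exact_mod_cast hm
  set t : ℝ := c / m with ht
  have ht0 : 0 < t := div_pos hc hm0
  have key : ∀ v : Fin m → Bool,
      Real.exp (t * (wsum v : ℝ)) = ∏ r, Real.exp (t * (sgn (v r) : ℝ)) := by
    intro v
    rw [← Real.exp_sum, ← Finset.mul_sum]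
    congr 2
    simp [wsum]
  have sum_eq : ∑ v : Fin m → Bool, Real.exp (t * (wsum v : ℝ))
      = (Real.exp t + Real.exp (-t)) ^ m := by
    simp_rw [key]
    rw [← Fintype.piFinset_univ, ← Finset.prod_univ_sum (t := fun _ : Fin m => (univ : Finset Bool)) (f := fun _ s => Real.exp (t * (sgn s : ℝ)))]
    have : ∀ r : Fin m, (∑ s : Bool, Real.exp (t * (sgn s : ℝ)))
        = Real.exp t + Real.exp (-t) := by
      intro r
      rw [Fintype.sum_bool]
      simp [sgn]
    rw [Finset.prod_congr rfl fun r _ => this r, Finset.prod_const, Finset.card_univ,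
      Fintype.card_fin]
  have lower : (((univ : Finset (Fin m → Bool)).filter fun v => c ≤ (wsum v : ℝ)).card : ℝ)
      * Real.exp (t * c) ≤ ∑ v : Fin m → Bool, Real.exp (t * (wsum v : ℝ)) := by
    calc (((univ : Finset (Fin m → Bool)).filter fun v => c ≤ (wsum v : ℝ)).card : ℝ)
        * Real.exp (t * c)
        = ∑ _v ∈ (univ : Finset (Fin m → Bool)).filter fun v => c ≤ (wsum v : ℝ),
            Real.exp (t * c) := by rw [Finset.sum_const, nsmul_eq_mul]
      _ ≤ ∑ v ∈ (univ : Finset (Fin m → Bool)).filter fun v => c ≤ (wsum v : ℝ),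
            Real.exp (t * (wsum v : ℝ)) := by
          refine Finset.sum_le_sum fun v hv => ?_
          have hcv : c ≤ (wsum v : ℝ) := (Finset.mem_filter.mp hv).2
          exact Real.exp_le_exp.mpr (by nlinarith)
      _ ≤ _ := Finset.sum_le_sum_of_subset_of_nonneg (Finset.filter_subset _ _)
          (fun _ _ _ => (Real.exp_pos _).le)
  have upper : (Real.exp t + Real.exp (-t)) ^ m ≤ 2 ^ m * Real.exp (m * t ^ 2 / 2) := by
    have h1 : Real.exp t + Real.exp (-t) ≤ 2 * Real.exp (t ^ 2 / 2) := by
      have := Real.cosh_le_exp_half_sq t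
      rw [Real.cosh_eq] at this
      linarith
    calc (Real.exp t + Real.exp (-t)) ^ m ≤ (2 * Real.exp (t ^ 2 / 2)) ^ m := by
          apply pow_le_pow_left₀ (by positivity) h1
      _ = 2 ^ m * Real.exp (m * t ^ 2 / 2) := by
          rw [mul_pow, ← Real.exp_nat_mul]
          ring_nf
  have hfin : (((univ : Finset (Fin m → Bool)).filter fun v => c ≤ (wsum v : ℝ)).card : ℝ)
      ≤ 2 ^ m * Real.exp (m * t ^ 2 / 2 - t * c) := by
    rw [Real.exp_sub, ← mul_div_assoc]
    rw [le_div_iff₀ (Real.exp_pos _)]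
    calc _ ≤ ∑ v : Fin m → Bool, Real.exp (t * (wsum v : ℝ)) := lower
      _ = (Real.exp t + Real.exp (-t)) ^ m := sum_eq
      _ ≤ _ := upper
  have harg : m * t ^ 2 / 2 - t * c = -c ^ 2 / (2 * m) := by
    rw [ht]; field_simp; ring
  rwa [harg] at hfin

lemma gauss (N : ℕ) : 2 * ∑ i ∈ range N, (i + 1) = N * (N + 1) := by
  induction N with
  | zero => simp
  | succ n ih => rw [Finset.sum_range_succ, mul_add, ih]; ring

/-- count of pairs (i,j) in [1,n]^2 with j - i ≥ k -/
lemma count_ab (n k : ℤ) (hk : 0 < k) (hkn : k < n) :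
    (n - k).toNat * ((n - k).toNat + 1)
      ≤ 2 * ((Finset.Icc 1 n ×ˢ Finset.Icc 1 n).filter fun p : ℤ × ℤ => k ≤ p.2 - p.1).card := by
  set s := (Finset.Icc 1 n ×ˢ Finset.Icc 1 n).filter fun p : ℤ × ℤ => k ≤ p.2 - p.1 with hs
  have hcard : s.card = ∑ j ∈ Finset.Icc (1:ℤ) n, (s.filter fun p => p.2 = j).card := by
    apply Finset.card_eq_sum_card_fiberwise
    intro p hp
    exact (Finset.mem_product.mp (Finset.mem_filter.mp hp).1).2
  have hfib : ∀ j ∈ Finset.Icc (1:ℤ) n,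
      (s.filter fun p => p.2 = j) = Finset.Icc 1 (j - k) ×ˢ {j} := by
    intro j hj
    rw [Finset.mem_Icc] at hj
    ext p
    simp only [hs, Finset.mem_filter, Finset.mem_product, Finset.mem_Icc,
      Finset.mem_singleton]
    constructor
    · rintro ⟨⟨⟨h1, h2⟩, h3⟩, h4⟩
      omega
    · rintro ⟨⟨h1, h2⟩, h3⟩
      omega
  have hval : s.card = ∑ j ∈ Finset.Icc (1:ℤ) n, (j - k).toNat := by
    rw [hcard]
    refine Finset.sum_congr rfl fun j hj => ?_
    rw [hfib j hj, Finset.card_product, Finset.card_singleton, Int.card_Icc]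
    simp
  have hsub : ∑ j ∈ Finset.Icc (k+1) n, (j - k).toNat ≤ s.card := by
    rw [hval]
    apply Finset.sum_le_sum_of_subset
    apply Finset.Icc_subset_Icc_left
    omega
  have hre : ∑ j ∈ Finset.Icc (k+1) n, (j - k).toNat
      = ∑ i ∈ range (n - k).toNat, (i + 1) := by
    refine Finset.sum_nbij' (fun j => (j - k - 1).toNat) (fun i => (i : ℤ) + k + 1)
      ?_ ?_ ?_ ?_ ?_
    · intro j hj; rw [Finset.mem_Icc] at hj; rw [Finset.mem_range]; omega
    · intro i hi; rw [Finset.mem_range] at hi; rw [Finset.mem_Icc]; omega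
    · intro j hj; rw [Finset.mem_Icc] at hj; omega
    · intro i hi; rw [Finset.mem_range] at hi; omega
    · intro j hj; rw [Finset.mem_Icc] at hj; omega
  have := gauss (n - k).toNat
  omega

end MillionairesAux

open MillionairesAux in
set_option maxHeartbeats 1000000 in
/-- (Main inequality) Let `n ≥ 2`, `m ≥ 1` be integers and `1/2 < α ≤ 1` a real with
`2·m^α` an integer and `2·m^α < n`. Let `a`, `b` be independent random variables uniform
on `{1, …, n}` and let `S_m`, `S'_m` be two simple symmetric random walks of `m` steps
started at `0`, everything mutually independent. With `A = a + S_m`, `B = b + S'_m`: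
`P(a < b | A < B) ≥ (1 - exp(-m^(2α-1)/2))² · ((n - 2m^α + 1)(n - 2m^α)/(n² - n)) · (1 - 1/n)`. -/
theorem millionaires_main_inequality
    {Ω : Type*} [MeasurableSpace Ω] (P : Measure Ω) [IsProbabilityMeasure P]
    (n m : ℕ) (hn : 2 ≤ n) (hm : 1 ≤ m)
    (α : ℝ) (hα : 1 / 2 < α) (hα1 : α ≤ 1)
    (hint : ∃ k : ℤ, (k : ℝ) = 2 * (m : ℝ) ^ α)
    (hlt : 2 * (m : ℝ) ^ α < n)
    (a b : Ω → ℤ) (X X' : Fin m → Ω → ℤ)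
    (ha : Measurable a) (hb : Measurable b)
    (hX : ∀ i, Measurable (X i)) (hX' : ∀ i, Measurable (X' i))
    (hua : ∀ k : ℤ, k ∈ Finset.Icc (1 : ℤ) (n : ℤ) → P {ω | a ω = k} = 1 / (n : ℝ≥0∞))
    (hub : ∀ k : ℤ, k ∈ Finset.Icc (1 : ℤ) (n : ℤ) → P {ω | b ω = k} = 1 / (n : ℝ≥0∞))
    (hone : ∀ i, P {ω | X i ω = 1} = 1 / 2)
    (hmone : ∀ i, P {ω | X i ω = -1} = 1 / 2)
    (hone' : ∀ i, P {ω | X' i ω = 1} = 1 / 2)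
    (hmone' : ∀ i, P {ω | X' i ω = -1} = 1 / 2)
    (hindep : iIndepFun
      (Sum.elim ![a, b] (Sum.elim X X') : (Fin 2 ⊕ (Fin m ⊕ Fin m)) → Ω → ℤ) P) :
    (1 - Real.exp (-(m : ℝ) ^ (2 * α - 1) / 2)) ^ 2
        * (((n : ℝ) - 2 * (m : ℝ) ^ α + 1) * ((n : ℝ) - 2 * (m : ℝ) ^ α)
            / ((n : ℝ) ^ 2 - n))
        * (1 - 1 / (n : ℝ))
      ≤ (P[{ω | a ω < b ω} | {ω | a ω + ∑ i, X i ω < b ω + ∑ i, X' i ω}]).toReal := by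
  classical
  obtain ⟨k, hk⟩ := hint
  set Y : (Fin 2 ⊕ (Fin m ⊕ Fin m)) → Ω → ℤ := Sum.elim ![a, b] (Sum.elim X X') with hY
  set T : Finset (ℤ × ℤ × (Fin m → Bool) × (Fin m → Bool)) :=
    (Finset.Icc (1:ℤ) (n:ℤ)) ×ˢ ((Finset.Icc (1:ℤ) (n:ℤ)) ×ˢ ((univ : Finset (Fin m → Bool)) ×ˢ (univ : Finset (Fin m → Bool)))) with hT
  set ap : ℝ≥0∞ := (n:ℝ≥0∞)⁻¹ * ((n:ℝ≥0∞)⁻¹ * (((2:ℝ≥0∞)⁻¹)^m * ((2:ℝ≥0∞)⁻¹)^m)) with hap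
  set Atom : (ℤ × ℤ × (Fin m → Bool) × (Fin m → Bool)) → Set Ω := fun q =>
    {ω | a ω = q.1 ∧ b ω = q.2.1 ∧ (∀ r, X r ω = sgn (q.2.2.1 r)) ∧ (∀ r, X' r ω = sgn (q.2.2.2 r))} with hAtom
  -- atom as intersection of preimages
  have hAtomEq : ∀ q : ℤ × ℤ × (Fin m → Bool) × (Fin m → Bool),
      Atom q = ⋂ idx ∈ (Finset.univ : Finset (Fin 2 ⊕ (Fin m ⊕ Fin m))),
        Y idx ⁻¹' {(Sum.elim ![q.1, q.2.1] (Sum.elim (fun r => sgn (q.2.2.1 r)) (fun r => sgn (q.2.2.2 r))) : (Fin 2 ⊕ (Fin m ⊕ Fin m)) → ℤ) idx} := by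
    intro q
    ext ω
    simp only [hAtom, Set.mem_setOf_eq, Set.mem_iInter, Finset.mem_univ, Set.mem_preimage,
      Set.mem_singleton_iff, Sum.forall, hY, Sum.elim_inl, Sum.elim_inr, Fin.forall_fin_two]
    simp only [Matrix.cons_val_zero, Matrix.cons_val_one, Matrix.head_cons]
    tauto
  have hAtomP : ∀ q ∈ T, P (Atom q) = ap := by
    intro q hq
    simp only [hT, Finset.mem_product] at hq
    obtain ⟨hq1, hq2, -⟩ := hq
    rw [hAtomEq q]
    rw [hindep.measure_inter_preimage_eq_mul Finset.univ
      (sets := fun idx => {(Sum.elim ![q.1, q.2.1] (Sum.elim (fun r => sgn (q.2.2.1 r)) (fun r => sgn (q.2.2.2 r))) : (Fin 2 ⊕ (Fin m ⊕ Fin m)) → ℤ) idx})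
      (fun idx _ => measurableSet_singleton _)]
    rw [Fintype.prod_sum_type, Fin.prod_univ_two, Fintype.prod_sum_type]
    have e1 : P (Y (Sum.inl 0) ⁻¹' {(Sum.elim ![q.1, q.2.1] (Sum.elim (fun r => sgn (q.2.2.1 r)) (fun r => sgn (q.2.2.2 r))) : (Fin 2 ⊕ (Fin m ⊕ Fin m)) → ℤ) (Sum.inl 0)}) = (n:ℝ≥0∞)⁻¹ := by
      have := hua q.1 hq1
      rw [one_div] at this
      exact this
    have e2 : P (Y (Sum.inl 1) ⁻¹' {(Sum.elim ![q.1, q.2.1] (Sum.elim (fun r => sgn (q.2.2.1 r)) (fun r => sgn (q.2.2.2 r))) : (Fin 2 ⊕ (Fin m ⊕ Fin m)) → ℤ) (Sum.inl 1)}) = (n:ℝ≥0∞)⁻¹ := by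
      have := hub q.2.1 hq2
      rw [one_div] at this
      exact this
    have e3 : ∀ r : Fin m, P (Y (Sum.inr (Sum.inl r)) ⁻¹' {(Sum.elim ![q.1, q.2.1] (Sum.elim (fun r => sgn (q.2.2.1 r)) (fun r => sgn (q.2.2.2 r))) : (Fin 2 ⊕ (Fin m ⊕ Fin m)) → ℤ) (Sum.inr (Sum.inl r))}) = (2:ℝ≥0∞)⁻¹ := by
      intro r
      cases hv : q.2.2.1 r
      · have := hmone r
        rw [one_div] at this
        simp [hY, sgn, hv]; exact this
      · have := hone r
        rw [one_div] at this
        simp [hY, sgn, hv]; exact this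
    have e4 : ∀ r : Fin m, P (Y (Sum.inr (Sum.inr r)) ⁻¹' {(Sum.elim ![q.1, q.2.1] (Sum.elim (fun r => sgn (q.2.2.1 r)) (fun r => sgn (q.2.2.2 r))) : (Fin 2 ⊕ (Fin m ⊕ Fin m)) → ℤ) (Sum.inr (Sum.inr r))}) = (2:ℝ≥0∞)⁻¹ := by
      intro r
      cases hv : q.2.2.2 r
      · have := hmone' r
        rw [one_div] at this
        simp [hY, sgn, hv]; exact this
      · have := hone' r
        rw [one_div] at this
        simp [hY, sgn, hv]; exact this
    rw [e1, e2, Finset.prod_congr rfl (fun r _ => e3 r), Finset.prod_congr rfl (fun r _ => e4 r)]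
    simp only [Finset.prod_const, Finset.card_univ, Fintype.card_fin]
    rw [hap]
    ring
  have hAtomMeas : ∀ q : ℤ × ℤ × (Fin m → Bool) × (Fin m → Bool), MeasurableSet (Atom q) := by
    intro q
    have : Atom q = {ω | a ω = q.1} ∩ ({ω | b ω = q.2.1} ∩
        ((⋂ r, {ω | X r ω = sgn (q.2.2.1 r)}) ∩ (⋂ r, {ω | X' r ω = sgn (q.2.2.2 r)}))) := by
      ext ω
      simp only [hAtom, Set.mem_setOf_eq, Set.mem_inter_iff, Set.mem_iInter]
    rw [this]
    exact (ha (measurableSet_singleton _)).inter ((hb (measurableSet_singleton _)).inter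
      ((MeasurableSet.iInter fun r => hX r (measurableSet_singleton _)).inter
        (MeasurableSet.iInter fun r => hX' r (measurableSet_singleton _))))
  have hDisj : ∀ q q' : ℤ × ℤ × (Fin m → Bool) × (Fin m → Bool), q ≠ q' →
      Disjoint (Atom q) (Atom q') := by
    intro q q' hne
    rw [Set.disjoint_left]
    intro ω hω hω'
    apply hne
    obtain ⟨i, j, v, w⟩ := q
    obtain ⟨i', j', v', w'⟩ := q'
    obtain ⟨e1, e2, e3, e4⟩ := hω
    obtain ⟨f1, f2, f3, f4⟩ := hω'
    have hv : v = v' := funext fun r => sgn_injective ((e3 r).symm.trans (f3 r))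
    have hw : w = w' := funext fun r => sgn_injective ((e4 r).symm.trans (f4 r))
    simp only [Prod.mk.injEq]
    exact ⟨e1.symm.trans f1, e2.symm.trans f2, hv, hw⟩
  -- the support set
  set N : Set Ω := {ω | (a ω ∈ Finset.Icc (1:ℤ) (n:ℤ)) ∧ (b ω ∈ Finset.Icc (1:ℤ) (n:ℤ)) ∧
      (∀ r, X r ω = 1 ∨ X r ω = -1) ∧ (∀ r, X' r ω = 1 ∨ X' r ω = -1)} with hN
  have huni : ∀ (f : Ω → ℤ), Measurable f → (∀ c ∈ Finset.Icc (1:ℤ) (n:ℤ), P {ω | f ω = c} = 1 / (n:ℝ≥0∞)) →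
      P {ω | f ω ∈ Finset.Icc (1:ℤ) (n:ℤ)}ᶜ = 0 := by
    intro f hf hu
    have hset : {ω | f ω ∈ Finset.Icc (1:ℤ) (n:ℤ)} = ⋃ c ∈ Finset.Icc (1:ℤ) (n:ℤ), f ⁻¹' {c} := by
      ext ω; simp
    have hmeas : MeasurableSet {ω | f ω ∈ Finset.Icc (1:ℤ) (n:ℤ)} := by
      rw [hset]
      exact MeasurableSet.biUnion (Finset.Icc (1:ℤ) (n:ℤ)).countable_toSet
        (fun c _ => hf (measurableSet_singleton _))
    have h1 : P {ω | f ω ∈ Finset.Icc (1:ℤ) (n:ℤ)} = 1 := by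
      rw [hset, measure_biUnion_finset ?disj (fun c _ => hf (measurableSet_singleton _))]
      case disj =>
        intro c _ c' _ hcc
        exact Set.disjoint_left.mpr fun ω h1 h2 => hcc (h1.symm.trans h2)
      have hu' : ∀ c ∈ Finset.Icc (1:ℤ) (n:ℤ), P (f ⁻¹' {c}) = 1 / (n:ℝ≥0∞) :=
        fun c hc => hu c hc
      rw [Finset.sum_congr rfl hu', Finset.sum_const, Int.card_Icc]
      simp only [nsmul_eq_mul, one_div]
      have : ((n:ℤ) + 1 - 1).toNat = n := by omega
      rw [this]
      exact ENNReal.mul_inv_cancel (by exact_mod_cast (show n ≠ 0 by omega))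
        (ENNReal.natCast_ne_top n)
    rwa [prob_compl_eq_zero_iff hmeas]
  have hpm : ∀ (f : Ω → ℤ), Measurable f → P {ω | f ω = 1} = 1/2 → P {ω | f ω = -1} = 1/2 →
      P {ω | f ω = 1 ∨ f ω = -1}ᶜ = 0 := by
    intro f hf h1 h2
    have hset : {ω | f ω = 1 ∨ f ω = -1} = f ⁻¹' {1} ∪ f ⁻¹' {-1} := by
      ext ω; simp [Set.mem_union]
    have hmeas : MeasurableSet {ω | f ω = 1 ∨ f ω = -1} := by
      rw [hset]; exact (hf (measurableSet_singleton _)).union (hf (measurableSet_singleton _))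
    rw [prob_compl_eq_zero_iff hmeas]
    rw [hset, measure_union ?dd (hf (measurableSet_singleton _))]
    case dd =>
      refine Set.disjoint_left.mpr fun ω hh1 hh2 => ?_
      simp only [Set.mem_preimage, Set.mem_singleton_iff] at hh1 hh2
      omega
    rw [show (f ⁻¹' {1}) = {ω | f ω = 1} from rfl, show (f ⁻¹' {-1}) = {ω | f ω = -1} from rfl,
      h1, h2]
    rw [ENNReal.div_add_div_same, one_add_one_eq_two]
    exact ENNReal.div_self (by norm_num) ENNReal.ofNat_ne_top
  have hNnull : P Nᶜ = 0 := by
    have hsub : Nᶜ ⊆ {ω | a ω ∈ Finset.Icc (1:ℤ) (n:ℤ)}ᶜ ∪ ({ω | b ω ∈ Finset.Icc (1:ℤ) (n:ℤ)}ᶜ ∪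
        ((⋃ r, {ω | X r ω = 1 ∨ X r ω = -1}ᶜ) ∪ (⋃ r, {ω | X' r ω = 1 ∨ X' r ω = -1}ᶜ))) := by
      intro ω hω
      simp only [hN, Set.mem_compl_iff, Set.mem_setOf_eq, not_and_or, not_forall] at hω
      simp only [Set.mem_union, Set.mem_compl_iff, Set.mem_iUnion, Set.mem_setOf_eq]
      rcases hω with h | h | h | h
      · left; exact h
      · right; left; exact h
      · right; right; left; obtain ⟨r, hr⟩ := h; exact ⟨r, hr⟩
      · right; right; right; obtain ⟨r, hr⟩ := h; exact ⟨r, hr⟩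
    refine measure_mono_null hsub ?_
    refine measure_union_null (huni a ha hua) (measure_union_null (huni b hb hub)
      (measure_union_null ?_ ?_))
    · exact measure_iUnion_null fun r => hpm (X r) (hX r) (hone r) (hmone r)
    · exact measure_iUnion_null fun r => hpm (X' r) (hX' r) (hone' r) (hmone' r)
  -- master decomposition
  have master : ∀ (Q : ℤ → ℤ → ℤ → ℤ → Prop),
      P {ω | Q (a ω) (b ω) (∑ i, X i ω) (∑ i, X' i ω)}
        = ((T.filter fun q => Q q.1 q.2.1 (wsum q.2.2.1) (wsum q.2.2.2)).card : ℝ≥0∞) * ap := by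
    intro Q
    set s := T.filter fun q => Q q.1 q.2.1 (wsum q.2.2.1) (wsum q.2.2.2) with hs
    set E := {ω | Q (a ω) (b ω) (∑ i, X i ω) (∑ i, X' i ω)} with hE
    set U := ⋃ q ∈ s, Atom q with hU
    have hU_sub : U ⊆ E := by
      rw [hU]
      refine Set.iUnion₂_subset fun q hq => ?_
      intro ω hω
      obtain ⟨e1, e2, e3, e4⟩ := hω
      have hQ : Q q.1 q.2.1 (wsum q.2.2.1) (wsum q.2.2.2) := (Finset.mem_filter.mp hq).2
      have hx : ∑ i, X i ω = wsum q.2.2.1 := Finset.sum_congr rfl fun r _ => e3 r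
      have hx' : ∑ i, X' i ω = wsum q.2.2.2 := Finset.sum_congr rfl fun r _ => e4 r
      show Q (a ω) (b ω) (∑ i, X i ω) (∑ i, X' i ω)
      rw [e1, e2, hx, hx']
      exact hQ
    have hEN : E ∩ N ⊆ U := by
      rintro ω ⟨hEω, hNω⟩
      obtain ⟨hN1, hN2, hN3, hN4⟩ := hNω
      set v : Fin m → Bool := fun r => decide (X r ω = 1) with hv
      set w : Fin m → Bool := fun r => decide (X' r ω = 1) with hw
      have hvr : ∀ r, X r ω = sgn (v r) := by
        intro r
        rcases hN3 r with h | h <;> simp [hv, h, sgn]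
      have hwr : ∀ r, X' r ω = sgn (w r) := by
        intro r
        rcases hN4 r with h | h <;> simp [hw, h, sgn]
      have hxv : ∑ i, X i ω = wsum v := Finset.sum_congr rfl fun r _ => hvr r
      have hxw : ∑ i, X' i ω = wsum w := Finset.sum_congr rfl fun r _ => hwr r
      have hmem : ((a ω, b ω, v, w) : ℤ × ℤ × (Fin m → Bool) × (Fin m → Bool)) ∈ s := by
        rw [hs, Finset.mem_filter]
        constructor
        · rw [hT]
          simp only [Finset.mem_product, Finset.mem_univ, and_true]
          exact ⟨hN1, hN2⟩
        · show Q (a ω) (b ω) (wsum v) (wsum w)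
          rw [← hxv, ← hxw]
          exact hEω
      exact Set.mem_iUnion₂.mpr ⟨(a ω, b ω, v, w), hmem, ⟨rfl, rfl, hvr, hwr⟩⟩
    have hPU : P U = (s.card : ℝ≥0∞) * ap := by
      rw [hU, measure_biUnion_finset ?dis (fun q _ => hAtomMeas q)]
      case dis =>
        intro q hq q' hq' hne
        exact hDisj q q' hne
      rw [Finset.sum_congr rfl (fun q hq => hAtomP q (Finset.mem_filter.mp (hs ▸ hq)).1),
        Finset.sum_const, nsmul_eq_mul]
    have hEU : P E = P U := by
      apply le_antisymm
      · calc P E = P (E ∩ N) := (measure_inter_conull hNnull).symm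
          _ ≤ P U := measure_mono hEN
      · exact measure_mono hU_sub
    rw [hEU, hPU]
  -- basic number facts
  have hm0 : (0:ℝ) < m := by exact_mod_cast hm
  have hc1 : (1:ℝ) ≤ (m:ℝ) ^ α := Real.one_le_rpow (by exact_mod_cast hm) (by linarith)
  have hk2 : (2:ℤ) ≤ k := by
    have : (2:ℝ) ≤ (k:ℝ) := by rw [hk]; linarith
    exact_mod_cast this
  have hkn : k < (n:ℤ) := by
    have : (k:ℝ) < ((n:ℤ):ℝ) := by rw [hk]; push_cast; exact hlt
    exact_mod_cast this
  -- events
  set F := {ω | a ω + ∑ i, X i ω < b ω + ∑ i, X' i ω} with hF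
  set E := {ω | a ω < b ω} with hE
  set G := {ω | (k ≤ b ω - a ω) ∧ (2 * (∑ i, X i ω) < k) ∧ (-k < 2 * (∑ i, X' i ω))} with hG
  have hGsub : G ⊆ F ∩ E := by
    rintro ω ⟨h1, h2, h3⟩
    constructor
    · show a ω + ∑ i, X i ω < b ω + ∑ i, X' i ω
      omega
    · show a ω < b ω
      omega
  -- decompositions
  have hPF : P F = ((T.filter fun q => q.1 + wsum q.2.2.1 < q.2.1 + wsum q.2.2.2).card : ℝ≥0∞)
      * ap := by
    rw [hF]
    have h := master (fun i j s s' => i + s < j + s')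
    convert h using 3 <;> congr!
  have hPG : P G = ((T.filter fun q => (k ≤ q.2.1 - q.1) ∧ (2 * wsum q.2.2.1 < k) ∧
      (-k < 2 * wsum q.2.2.2)).card : ℝ≥0∞) * ap := by
    rw [hG]
    have h := master (fun i j s s' => (k ≤ j - i) ∧ (2 * s < k) ∧ (-k < 2 * s'))
    convert h using 3 <;> congr!
  set cF := (T.filter fun q => q.1 + wsum q.2.2.1 < q.2.1 + wsum q.2.2.2).card with hcF
  set cG := (T.filter fun q => (k ≤ q.2.1 - q.1) ∧ (2 * wsum q.2.2.1 < k) ∧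
      (-k < 2 * wsum q.2.2.2)).card with hcG
  -- counting: factorization of cG
  set Nab := ((Finset.Icc (1:ℤ) (n:ℤ) ×ˢ Finset.Icc (1:ℤ) (n:ℤ)).filter
      fun p : ℤ × ℤ => k ≤ p.2 - p.1).card with hNabd
  set NS := ((univ : Finset (Fin m → Bool)).filter fun v => 2 * wsum v < k).card with hNSd
  set NS' := ((univ : Finset (Fin m → Bool)).filter fun w => -k < 2 * wsum w).card with hNS'd
  have hfact : cG = Nab * (NS * NS') := by
    rw [hcG, hNabd, hNSd, hNS'd, ← Finset.card_product, ← Finset.card_product]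
    apply Finset.card_nbij' (fun q => ((q.1, q.2.1), q.2.2.1, q.2.2.2))
      (fun p => (p.1.1, p.1.2, p.2.1, p.2.2))
    · intro q hq
      simp only [hT, Finset.mem_coe, Finset.mem_filter, Finset.mem_product, Finset.mem_univ, and_true,
        true_and] at hq ⊢
      tauto
    · intro p hp
      simp only [hT, Finset.mem_coe, Finset.mem_filter, Finset.mem_product, Finset.mem_univ, and_true,
        true_and] at hp ⊢
      tauto
    · intro q hq; rfl
    · intro p hp; rfl
  -- count bounds
  have hNab_ge : ((n:ℤ) - k).toNat * (((n:ℤ) - k).toNat + 1) ≤ 2 * Nab :=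
    count_ab (n:ℤ) k (by omega) hkn
  set c : ℝ := (m:ℝ) ^ α with hcc
  have hc0 : (0:ℝ) < c := lt_of_lt_of_le one_pos hc1
  set e : ℝ := Real.exp (-(m:ℝ) ^ (2 * α - 1) / 2) with he
  have hexp_eq : -c ^ 2 / (2 * (m:ℝ)) = -((m:ℝ) ^ (2 * α - 1)) / 2 := by
    have h1 : c ^ 2 = (m:ℝ) ^ (2 * α) := by
      rw [hcc, sq, ← Real.rpow_add hm0]
      congr 1
      ring
    have h2 : (m:ℝ) ^ (2 * α) = (m:ℝ) ^ (2 * α - 1) * (m:ℝ) := by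
      have h3 : (m:ℝ) ^ (2 * α) = (m:ℝ) ^ (2 * α - 1) * (m:ℝ) ^ (1:ℝ) := by
        rw [← Real.rpow_add hm0]
        congr 1
        ring
      rwa [Real.rpow_one] at h3
    rw [div_eq_div_iff (by positivity) (by norm_num), h1, h2]
    ring
  have hchern : ∀ s : Finset (Fin m → Bool), s = (univ : Finset (Fin m → Bool)).filter
      (fun v => c ≤ (wsum v : ℝ)) → (s.card : ℝ) ≤ 2 ^ m * e := by
    intro s hs'
    rw [hs']
    calc (((univ : Finset (Fin m → Bool)).filter (fun v => c ≤ (wsum v : ℝ))).card : ℝ)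
        ≤ 2 ^ m * Real.exp (-c ^ 2 / (2 * m)) := chernoff m hm c hc0
      _ = 2 ^ m * e := by rw [hexp_eq, he]
  have hBoolCard : (univ : Finset (Fin m → Bool)).card = 2 ^ m := by
    simp [Finset.card_univ]
  have hNS_ge : (2:ℝ) ^ m * (1 - e) ≤ (NS : ℝ) := by
    have heq : ((univ : Finset (Fin m → Bool)).filter fun v => ¬ (2 * wsum v < k))
        = (univ : Finset (Fin m → Bool)).filter fun v => c ≤ (wsum v : ℝ) := by
      apply Finset.filter_congr
      intro v _
      rw [not_lt]
      constructor
      · intro h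
        have h' : (k:ℝ) ≤ 2 * ((wsum v : ℤ) : ℝ) := by exact_mod_cast h
        rw [hk] at h'
        rw [hcc]
        linarith
      · intro h
        have h' : (k:ℝ) ≤ 2 * ((wsum v : ℤ) : ℝ) := by rw [hk]; rw [hcc] at h; linarith
        exact_mod_cast h'
    have hcomp : (((univ : Finset (Fin m → Bool)).filter fun v => ¬ (2 * wsum v < k)).card : ℝ)
        ≤ 2 ^ m * e := hchern _ heq
    have hsplit : NS + ((univ : Finset (Fin m → Bool)).filter
        fun v => ¬ (2 * wsum v < k)).card = 2 ^ m := by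
      rw [hNSd, Finset.card_filter_add_card_filter_not, hBoolCard]
    have hsplit' : (NS : ℝ) + (((univ : Finset (Fin m → Bool)).filter
        fun v => ¬ (2 * wsum v < k)).card : ℝ) = 2 ^ m := by exact_mod_cast hsplit
    linarith
  have hNS'_ge : (2:ℝ) ^ m * (1 - e) ≤ (NS' : ℝ) := by
    have hinj : (((univ : Finset (Fin m → Bool)).filter fun w => ¬ (-k < 2 * wsum w)).card)
        ≤ (((univ : Finset (Fin m → Bool)).filter fun v => c ≤ (wsum v : ℝ)).card) := by
      apply Finset.card_le_card_of_injOn (fun w r => ! (w r))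
      · intro w hw
        simp only [Finset.mem_coe, Finset.mem_filter, Finset.mem_univ, true_and, not_lt] at hw ⊢
        have h2 : wsum (fun r => !(w r)) = - wsum w := wsum_not w
        rw [h2]
        have h' : 2 * ((wsum w : ℤ) : ℝ) ≤ -(k:ℝ) := by exact_mod_cast hw
        rw [hk] at h'
        rw [hcc]
        push_cast
        linarith
      · intro w1 _ w2 _ hww
        funext r
        have hr := congrFun hww r
        simpa using hr
    have hcomp : (((univ : Finset (Fin m → Bool)).filter fun w => ¬ (-k < 2 * wsum w)).card : ℝ)
        ≤ 2 ^ m * e := by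
      calc (((univ : Finset (Fin m → Bool)).filter fun w => ¬ (-k < 2 * wsum w)).card : ℝ)
          ≤ (((univ : Finset (Fin m → Bool)).filter fun v => c ≤ (wsum v : ℝ)).card : ℝ) := by
            exact_mod_cast hinj
        _ ≤ 2 ^ m * e := hchern _ rfl
    have hsplit : NS' + ((univ : Finset (Fin m → Bool)).filter
        fun w => ¬ (-k < 2 * wsum w)).card = 2 ^ m := by
      rw [hNS'd, Finset.card_filter_add_card_filter_not, hBoolCard]
    have hsplit' : (NS' : ℝ) + (((univ : Finset (Fin m → Bool)).filter
        fun w => ¬ (-k < 2 * wsum w)).card : ℝ) = 2 ^ m := by exact_mod_cast hsplit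
    linarith
  -- cF is at most half of T
  have hIccCard : (Finset.Icc (1:ℤ) (n:ℤ)).card = n := by rw [Int.card_Icc]; omega
  have hTcard : T.card = n * n * (2 ^ m * 2 ^ m) := by
    rw [hT, Finset.card_product, Finset.card_product, Finset.card_product, hIccCard, hBoolCard]
    ring
  have hcF2 : 2 * cF ≤ T.card := by
    have hneg : cF ≤ (T.filter fun q => ¬ (q.1 + wsum q.2.2.1 < q.2.1 + wsum q.2.2.2)).card := by
      rw [hcF]
      apply Finset.card_le_card_of_injOn (fun q => (q.2.1, q.1, q.2.2.2, q.2.2.1))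
      · intro q hq
        simp only [hT, Finset.mem_coe, Finset.mem_filter, Finset.mem_product, Finset.mem_univ, and_true,
          true_and, not_lt] at hq ⊢
        obtain ⟨⟨m1, m2⟩, hlt'⟩ := hq
        exact ⟨⟨m2, m1⟩, by omega⟩
      · rintro ⟨i1, j1, v1, w1⟩ h1 ⟨i2, j2, v2, w2⟩ h2 hqq
        simp only [Prod.mk.injEq] at hqq ⊢
        tauto
    have := Finset.card_filter_add_card_filter_not
      (s := T) (p := fun q => q.1 + wsum q.2.2.1 < q.2.1 + wsum q.2.2.2)
    omega
  -- positivity and basic real facts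
  have hxlt : -(m:ℝ) ^ (2 * α - 1) / 2 < 0 := by
    have := Real.rpow_pos_of_pos hm0 (2 * α - 1)
    linarith
  have he0 : 0 < e := by rw [he]; exact Real.exp_pos _
  have he1 : e < 1 := by
    have h' := Real.exp_lt_exp.mpr hxlt
    rwa [Real.exp_zero, ← he] at h'
  have h2mpos : (0:ℝ) < 2 ^ m := by positivity
  have hNSpos : 0 < (NS : ℝ) := lt_of_lt_of_le (mul_pos h2mpos (by linarith)) hNS_ge
  have hNS'pos : 0 < (NS' : ℝ) := lt_of_lt_of_le (mul_pos h2mpos (by linarith)) hNS'_ge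
  have hNabpos : 0 < Nab := by
    have h1 : 1 ≤ ((n:ℤ) - k).toNat := by omega
    have h2 : 2 ≤ ((n:ℤ) - k).toNat * (((n:ℤ) - k).toNat + 1) :=
      le_trans (by omega) (Nat.mul_le_mul h1 (le_refl _))
    omega
  have hcGne : cG ≠ 0 := by
    rw [hfact]
    have hNSne : NS ≠ 0 := by
      intro h0
      rw [h0] at hNSpos
      simp at hNSpos
    have hNS'ne : NS' ≠ 0 := by
      intro h0
      rw [h0] at hNS'pos
      simp at hNS'pos
    exact Nat.mul_ne_zero hNabpos.ne' (Nat.mul_ne_zero hNSne hNS'ne)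
  -- ENNReal facts
  have hn0' : (n:ℝ≥0∞) ≠ 0 := by exact_mod_cast (show n ≠ 0 by omega)
  have hnT : (n:ℝ≥0∞) ≠ ⊤ := ENNReal.natCast_ne_top n
  have hap0 : ap ≠ 0 := by
    rw [hap]
    apply mul_ne_zero (ENNReal.inv_ne_zero.mpr hnT)
    apply mul_ne_zero (ENNReal.inv_ne_zero.mpr hnT)
    apply mul_ne_zero <;>
      exact pow_ne_zero _ (ENNReal.inv_ne_zero.mpr (by norm_num))
  have hGpos : 0 < P G := by
    rw [hPG]
    refine ENNReal.mul_pos ?_ hap0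
    exact_mod_cast hcGne
  have hFpos : 0 < P F := lt_of_lt_of_le hGpos
    (measure_mono (hGsub.trans Set.inter_subset_left))
  have hFmeas : MeasurableSet F := by
    rw [hF]
    exact measurableSet_lt (ha.add (Finset.measurable_sum _ fun i _ => hX i))
      (hb.add (Finset.measurable_sum _ fun i _ => hX' i))
  have htot : ((n * n * (2 ^ m * 2 ^ m) : ℕ) : ℝ≥0∞) * ap = 1 := by
    rw [hap]
    push_cast
    have hnn : (n:ℝ≥0∞) * (n:ℝ≥0∞)⁻¹ = 1 := ENNReal.mul_inv_cancel hn0' hnT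
    have h2m : ((2:ℝ≥0∞) ^ m) * (((2:ℝ≥0∞))⁻¹ ^ m) = 1 := by
      rw [← mul_pow, ENNReal.mul_inv_cancel (by norm_num) (by norm_num), one_pow]
    calc (n:ℝ≥0∞) * n * (2 ^ m * 2 ^ m) * ((n:ℝ≥0∞)⁻¹ * ((n:ℝ≥0∞)⁻¹ * (2⁻¹ ^ m * 2⁻¹ ^ m)))
        = ((n:ℝ≥0∞) * (n:ℝ≥0∞)⁻¹) * (((n:ℝ≥0∞) * (n:ℝ≥0∞)⁻¹))
            * (((2:ℝ≥0∞) ^ m) * 2⁻¹ ^ m) * (((2:ℝ≥0∞) ^ m) * 2⁻¹ ^ m) := by ring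
      _ = 1 := by rw [hnn, h2m]; norm_num
  have hPF_half : P F ≤ 2⁻¹ := by
    rw [hPF, ENNReal.le_inv_iff_mul_le]
    calc (cF:ℝ≥0∞) * ap * 2 = ((2 * cF : ℕ) : ℝ≥0∞) * ap := by push_cast; ring
      _ ≤ ((n * n * (2 ^ m * 2 ^ m) : ℕ) : ℝ≥0∞) * ap := by
          refine mul_le_mul_left ?_ ap
          exact_mod_cast le_trans hcF2 (le_of_eq hTcard)
      _ = 1 := htot
  have hcond : P[E|F] = (P F)⁻¹ * P (F ∩ E) := cond_apply hFmeas P E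
  have hup : P[E|F] ≤ 1 := by
    rw [hcond]
    calc (P F)⁻¹ * P (F ∩ E) ≤ (P F)⁻¹ * P F :=
          mul_le_mul_right (measure_mono Set.inter_subset_left) _
      _ = 1 := ENNReal.inv_mul_cancel hFpos.ne' (measure_ne_top P F)
  have hne_top : P[E|F] ≠ ⊤ := (lt_of_le_of_lt hup ENNReal.one_lt_top).ne
  have hlow : (2:ℝ≥0∞) * ((cG:ℝ≥0∞) * ap) ≤ P[E|F] := by
    rw [hcond]
    have h2 : (2:ℝ≥0∞) ≤ (P F)⁻¹ := by
      rw [ENNReal.le_inv_iff_mul_le]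
      calc (2:ℝ≥0∞) * P F ≤ 2 * 2⁻¹ := mul_le_mul_right hPF_half 2
        _ = 1 := ENNReal.mul_inv_cancel (by norm_num) (by norm_num)
    have h3 : (cG:ℝ≥0∞) * ap ≤ P (F ∩ E) := by
      rw [← hPG]
      exact measure_mono hGsub
    exact mul_le_mul' h2 h3
  -- real computation
  refine le_trans ?_ (ENNReal.toReal_mono hne_top hlow)
  have htoReal : ((2:ℝ≥0∞) * ((cG:ℝ≥0∞) * ap)).toReal
      = 2 * ((cG:ℝ) * ((n:ℝ)⁻¹ * ((n:ℝ)⁻¹ * (((2:ℝ)⁻¹) ^ m * ((2:ℝ)⁻¹) ^ m)))) := by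
    rw [hap]
    rw [ENNReal.toReal_mul, ENNReal.toReal_mul, ENNReal.toReal_mul, ENNReal.toReal_mul,
      ENNReal.toReal_mul]
    simp [ENNReal.toReal_inv, ENNReal.toReal_pow]
  rw [htoReal, ← hk]
  set Cr : ℝ := (n:ℝ)⁻¹ * ((n:ℝ)⁻¹ * (((2:ℝ)⁻¹) ^ m * ((2:ℝ)⁻¹) ^ m)) with hCrd
  have hn1 : (1:ℝ) < (n:ℝ) := by exact_mod_cast (show 1 < n by omega)
  have hknr : (k:ℝ) < (n:ℝ) := by exact_mod_cast hkn
  have hcast : ((((n:ℤ) - k).toNat : ℕ) : ℝ) = (n:ℝ) - (k:ℝ) := by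
    have h := Int.toNat_of_nonneg (by omega : (0:ℤ) ≤ (n:ℤ) - k)
    exact_mod_cast congrArg (Int.cast : ℤ → ℝ) h
  have hNab_r : ((n:ℝ) - (k:ℝ)) * (((n:ℝ) - (k:ℝ)) + 1) ≤ 2 * (Nab:ℝ) := by
    rw [← hcast]
    exact_mod_cast hNab_ge
  have hcGr : (cG:ℝ) = (Nab:ℝ) * ((NS:ℝ) * (NS':ℝ)) := by
    rw [hfact]
    push_cast
    ring
  have h1e : (0:ℝ) ≤ 1 - e := by linarith
  have hbS : (0:ℝ) ≤ 2 ^ m * (1 - e) := mul_nonneg h2mpos.le h1e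
  have hLHS : (1 - e) ^ 2 * (((n:ℝ) - (k:ℝ) + 1) * ((n:ℝ) - (k:ℝ)) / ((n:ℝ) ^ 2 - (n:ℝ)))
        * (1 - 1 / (n:ℝ))
      = (((n:ℝ) - (k:ℝ)) * (((n:ℝ) - (k:ℝ)) + 1) / 2 * ((2 ^ m * (1 - e)) * (2 ^ m * (1 - e))))
        * (2 * Cr) := by
    rw [hCrd]
    have hne1 : (n:ℝ) ≠ 0 := by linarith
    have hne2 : (n:ℝ) - 1 ≠ 0 := by intro h0; linarith
    have hne3 : (n:ℝ) ^ 2 - (n:ℝ) ≠ 0 := by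
      intro h0
      have : (n:ℝ) * ((n:ℝ) - 1) = 0 := by linarith [h0]; 
      rcases mul_eq_zero.mp this with h | h
      · exact hne1 h
      · exact hne2 h
    simp only [inv_pow]
    field_simp
  calc (1 - e) ^ 2 * (((n:ℝ) - (k:ℝ) + 1) * ((n:ℝ) - (k:ℝ)) / ((n:ℝ) ^ 2 - (n:ℝ)))
        * (1 - 1 / (n:ℝ))
      = (((n:ℝ) - (k:ℝ)) * (((n:ℝ) - (k:ℝ)) + 1) / 2
          * ((2 ^ m * (1 - e)) * (2 ^ m * (1 - e)))) * (2 * Cr) := hLHS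
    _ ≤ ((Nab:ℝ) * ((NS:ℝ) * (NS':ℝ))) * (2 * Cr) := by
        refine mul_le_mul_of_nonneg_right ?_ (by positivity)
        refine mul_le_mul (by linarith) (mul_le_mul hNS_ge hNS'_ge hbS (Nat.cast_nonneg NS))
          (mul_nonneg hbS hbS) (Nat.cast_nonneg Nab)
    _ = 2 * ((cG:ℝ) * Cr) := by rw [hcGr]; ring
end

section
/- (Improved main inequality) Let n ≥ 2 and m ≥ 1 be integers and let α be a real number with 1/2 < α ≤ 1 such that 2·m^α is an integer and 2·m^α < n (here m^α denotes a real power). Let a and b be independent random variables, each uniformly distributed on the integers {1, 2, …, n}, let S_m and S'_m be two simple symmetric random walks of m steps started at 0, with a, b and the two walks mutually independent, and set A = a + S_m, B = b + S'_m. Write Q = (n − 2m^α + 1)(n − 2m^α)/(n² − n). Then P(a < b | A < B) ≥ (1 − exp(−m^{2α−1}/2))² · Q · (1 − 1/n) + (1/2) · (1 − Q) · (1 − 1/n). -/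
open MeasureTheory ProbabilityTheory
open scoped ENNReal

namespace MillAux

open Finset

def sg (b : Bool) : ℤ := if b then 1 else -1

def sc {m : ℕ} (c : Fin m → Bool) : ℤ := ∑ i, sg (c i)

lemma sg_inj {b b' : Bool} (h : sg b = sg b') : b = b' := by
  cases b <;> cases b' <;> simp_all [sg]

lemma sg_not (b : Bool) : sg (!b) = - sg b := by cases b <;> simp [sg]

lemma sc_not {m : ℕ} (c : Fin m → Bool) : sc (fun i => !(c i)) = - sc c := by
  simp [sc, sg_not, Finset.sum_neg_distrib]

lemma sc_const_true {m : ℕ} : sc (fun _ : Fin m => true) = m := by simp [sc, sg]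

lemma sc_const_false {m : ℕ} : sc (fun _ : Fin m => false) = -m := by simp [sc, sg]

/-- Gauss sum over `Ioc 0 M` in `ℤ`. -/
lemma gauss (N : ℕ) : (∑ i ∈ Finset.Ioc (0:ℤ) (N:ℤ), i) * 2 = (N:ℤ) * ((N:ℤ) + 1) := by
  induction N with
  | zero => simp
  | succ N ih =>
      have h : Finset.Ioc (0:ℤ) ((N:ℤ)+1) = insert ((N:ℤ)+1) (Finset.Ioc (0:ℤ) (N:ℤ)) := by
        ext x; simp only [Finset.mem_Ioc, Finset.mem_insert]; omega
      have hni : ((N:ℤ)+1) ∉ Finset.Ioc (0:ℤ) (N:ℤ) := by simp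
      push_cast
      rw [h, Finset.sum_insert hni, add_mul, ih]; ring

lemma card_filter_product {γ δ : Type*} (A : Finset γ) (B : Finset δ) (p : γ → δ → Prop)
    [∀ a, DecidablePred (p a)] [DecidablePred (fun q : γ × δ => p q.1 q.2)] :
    ((A ×ˢ B).filter (fun q => p q.1 q.2)).card = ∑ a ∈ A, (B.filter (p a)).card := by
  rw [Finset.card_filter, Finset.sum_product]
  exact Finset.sum_congr rfl fun a _ => by
    rw [Finset.card_filter]
    exact Finset.sum_congr rfl fun b _ => by simp

/-- Counting pairs `(i,j)` in `Icc 1 n × Icc 1 n` with `i + c ≤ j`. -/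
lemma count_pairs (n : ℕ) (c : ℤ) (h1 : 1 ≤ c) (h2 : c ≤ (n:ℤ)) :
    ((((Finset.Icc (1:ℤ) n) ×ˢ (Finset.Icc (1:ℤ) n)).filter
        (fun p => p.1 + c ≤ p.2)).card : ℤ) * 2 = ((n:ℤ) - c) * ((n:ℤ) - c + 1) := by
  rw [card_filter_product (Finset.Icc (1:ℤ) n) (Finset.Icc (1:ℤ) n) (fun x y => x + c ≤ y)]
  have hstep : ∀ i ∈ Finset.Icc (1:ℤ) n,
      (((Finset.Icc (1:ℤ) n).filter (fun j => i + c ≤ j)).card : ℤ)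
        = max ((n:ℤ) + 1 - i - c) 0 := by
    intro i hi
    rw [Finset.mem_Icc] at hi
    have : (Finset.Icc (1:ℤ) n).filter (fun j => i + c ≤ j) = Finset.Icc (i + c) n := by
      ext j; simp only [Finset.mem_Icc, Finset.mem_filter]; omega
    rw [this, Int.card_Icc]
    rw [Int.toNat_eq_max]
    congr 1; omega
  push_cast
  rw [Finset.sum_congr rfl hstep]
  rw [show Finset.Icc (1:ℤ) (n:ℤ) = Finset.Ioc (0:ℤ) (n:ℤ) from by
        ext x; simp only [Finset.mem_Icc, Finset.mem_Ioc]; omega]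
  rw [← Finset.Ioc_union_Ioc_eq_Ioc (by omega : (0:ℤ) ≤ (n:ℤ) - c) (by omega : (n:ℤ) - c ≤ n),
    Finset.sum_union (by
      rw [Finset.disjoint_left]; intro x hx hx'
      rw [Finset.mem_Ioc] at hx hx'; omega)]
  have h0 : ∑ i ∈ Finset.Ioc ((n:ℤ) - c) n, max ((n:ℤ) + 1 - i - c) 0 = 0 := by
    apply Finset.sum_eq_zero
    intro i hi; rw [Finset.mem_Ioc] at hi; omega
  rw [h0, add_zero]
  have h1' : ∑ i ∈ Finset.Ioc (0:ℤ) ((n:ℤ) - c), max ((n:ℤ) + 1 - i - c) 0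
      = ∑ i ∈ Finset.Ioc (0:ℤ) ((n:ℤ) - c), i := by
    apply Finset.sum_nbij' (fun i => (n:ℤ) - c + 1 - i) (fun i => (n:ℤ) - c + 1 - i)
    · intro i hi; rw [Finset.mem_Ioc] at *; omega
    · intro i hi; rw [Finset.mem_Ioc] at *; omega
    · intro i _; omega
    · intro i _; omega
    · intro i hi; rw [Finset.mem_Ioc] at hi; omega
  rw [h1']
  obtain ⟨N, hN⟩ : ∃ N : ℕ, (N:ℤ) = (n:ℤ) - c := ⟨((n:ℤ) - c).toNat, by omega⟩
  rw [← hN, gauss]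

lemma card_univ_bool (m : ℕ) : (Finset.univ : Finset (Fin m → Bool)).card = 2 ^ m := by
  simp [Finset.card_univ]

/-- at least half of the sign-vector pairs satisfy `sc c ≤ sc c'`. -/
lemma half_count (m : ℕ) :
    2 ^ m * 2 ^ m ≤ 2 * (((Finset.univ ×ˢ Finset.univ :
        Finset ((Fin m → Bool) × (Fin m → Bool))).filter
        (fun p => sc p.1 ≤ sc p.2)).card) := by
  classical
  set U : Finset ((Fin m → Bool) × (Fin m → Bool)) := Finset.univ ×ˢ Finset.univ with hU
  set E := U.filter (fun p => sc p.1 ≤ sc p.2) with hE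
  set G := U.filter (fun p => sc p.2 < sc p.1) with hG
  set L := U.filter (fun p => sc p.1 < sc p.2) with hL
  have hGL : G.card = L.card := by
    apply Finset.card_nbij' (fun p => Prod.swap p) (fun p => Prod.swap p)
    · intro p hp; simp only [hG, hL, hU, Finset.mem_coe, Finset.mem_filter, Finset.mem_product] at *
      exact ⟨⟨Finset.mem_univ _, Finset.mem_univ _⟩, hp.2⟩
    · intro p hp; simp only [hG, hL, hU, Finset.mem_coe, Finset.mem_filter, Finset.mem_product] at *
      exact ⟨⟨Finset.mem_univ _, Finset.mem_univ _⟩, hp.2⟩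
    · intro p _; simp
    · intro p _; simp
  have hcover : E ∪ G = U := by
    ext p; simp only [hE, hG, Finset.mem_union, Finset.mem_filter]
    constructor
    · rintro (h | h) <;> exact h.1
    · intro h; rcases le_or_gt (sc p.1) (sc p.2) with h' | h'
      · exact Or.inl ⟨h, h'⟩
      · exact Or.inr ⟨h, h'⟩
  have hdisj : Disjoint E G := by
    rw [Finset.disjoint_left]
    intro p hp hp'
    simp only [hE, hG, Finset.mem_filter] at hp hp'
    exact absurd hp.2 (not_le.mpr hp'.2)
  have hcard : E.card + G.card = U.card := by
    rw [← Finset.card_union_of_disjoint hdisj, hcover]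
  have hUcard : U.card = 2 ^ m * 2 ^ m := by
    rw [hU, Finset.card_product, card_univ_bool]
  have hLcard : L.card ≤ E.card := Finset.card_le_card (by
    intro p hp; simp only [hL, hE, Finset.mem_filter] at *; exact ⟨hp.1, le_of_lt hp.2⟩)
  omega

/-- negation bijection. -/
lemma neg_count (m : ℕ) (D : ℝ) :
    ((Finset.univ : Finset (Fin m → Bool)).filter (fun c => ((sc c : ℤ) : ℝ) ≤ -D)).card
      = ((Finset.univ : Finset (Fin m → Bool)).filter (fun c => D ≤ ((sc c : ℤ) : ℝ))).card := by
  classical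
  apply Finset.card_nbij' (fun c => fun i => !(c i)) (fun c => fun i => !(c i))
  · intro c hc; simp only [Finset.mem_coe, Finset.mem_filter, Finset.mem_univ, true_and] at *
    rw [sc_not]; push_cast; linarith
  · intro c hc; simp only [Finset.mem_coe, Finset.mem_filter, Finset.mem_univ, true_and] at *
    rw [sc_not]; push_cast; linarith
  · intro c _; funext i; simp
  · intro c _; funext i; simp

/-- Chernoff/Hoeffding counting bound for `±1` sums. -/
lemma hoeff_count (m : ℕ) (hm : 1 ≤ m) (α : ℝ) (hα : 1 / 2 < α) (hα1 : α ≤ 1) :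
    (((Finset.univ : Finset (Fin m → Bool)).filter
        (fun c => (m:ℝ) ^ α ≤ ((sc c : ℤ) : ℝ))).card : ℝ)
      ≤ 2 ^ m * Real.exp (-(m:ℝ) ^ (2 * α - 1) / 2) := by
  classical
  have hm0 : (0:ℝ) < m := by exact_mod_cast hm
  set t : ℝ := (m:ℝ) ^ (α - 1) with htdef
  set D : ℝ := (m:ℝ) ^ α with hDdef
  have ht : 0 < t := Real.rpow_pos_of_pos hm0 _
  set Fl := (Finset.univ : Finset (Fin m → Bool)).filter (fun c => D ≤ ((sc c : ℤ) : ℝ)) with hFl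
  have step1 : (Fl.card : ℝ) ≤ ∑ c ∈ Fl, Real.exp (t * (((sc c : ℤ):ℝ) - D)) := by
    have : (Fl.card : ℝ) = ∑ _c ∈ Fl, (1:ℝ) := by simp
    rw [this]
    refine Finset.sum_le_sum fun c hc => Real.one_le_exp ?_
    rw [hFl, Finset.mem_filter] at hc
    exact mul_nonneg ht.le (by linarith [hc.2])
  have step2 : ∑ c ∈ Fl, Real.exp (t * (((sc c : ℤ):ℝ) - D))
      ≤ ∑ c ∈ Finset.univ, Real.exp (t * (((sc c : ℤ):ℝ) - D)) :=
    Finset.sum_le_sum_of_subset_of_nonneg (Finset.filter_subset _ _)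
      (fun c _ _ => (Real.exp_pos _).le)
  have step3 : ∑ c ∈ (Finset.univ : Finset (Fin m → Bool)),
        Real.exp (t * (((sc c : ℤ):ℝ) - D))
      = (∑ c ∈ (Finset.univ : Finset (Fin m → Bool)), Real.exp (t * ((sc c : ℤ):ℝ)))
          * Real.exp (-(t * D)) := by
    rw [Finset.sum_mul]
    refine Finset.sum_congr rfl fun c _ => ?_
    rw [← Real.exp_add]; congr 1; ring
  have hscR : ∀ c : Fin m → Bool, ((sc c : ℤ):ℝ) = ∑ i, (if c i then (1:ℝ) else -1) := by
    intro c
    simp only [sc, sg]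
    push_cast [apply_ite (fun z : ℤ => (z:ℝ))]
    rfl
  have step4 : ∑ c ∈ (Finset.univ : Finset (Fin m → Bool)), Real.exp (t * ((sc c : ℤ):ℝ))
      = (Real.exp t + Real.exp (-t)) ^ m := by
    have : ∀ c : Fin m → Bool,
        Real.exp (t * ((sc c : ℤ):ℝ)) = ∏ i, Real.exp (t * (if c i then (1:ℝ) else -1)) := by
      intro c
      rw [hscR, Finset.mul_sum, Real.exp_sum]
    rw [Finset.sum_congr rfl (fun c _ => this c)]
    rw [← Fintype.piFinset_univ,
      ← Finset.prod_univ_sum (fun _ : Fin m => (Finset.univ : Finset Bool))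
        (fun i b => Real.exp (t * (if b then (1:ℝ) else -1)))]
    have : ∀ i : Fin m, ∑ b : Bool, Real.exp (t * (if b then (1:ℝ) else -1))
        = Real.exp t + Real.exp (-t) := by
      intro i
      rw [Fintype.sum_bool]
      norm_num
    rw [Finset.prod_congr rfl (fun i _ => this i), Finset.prod_const, Finset.card_univ,
      Fintype.card_fin]
  have step5 : (Real.exp t + Real.exp (-t)) ^ m ≤ 2 ^ m * Real.exp ((m:ℝ) * t ^ 2 / 2) := by
    have hc : Real.exp t + Real.exp (-t) = 2 * Real.cosh t := by
      rw [Real.cosh_eq]; ring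
    rw [hc, mul_pow]
    refine mul_le_mul_of_nonneg_left ?_ (by positivity)
    calc Real.cosh t ^ m ≤ (Real.exp (t ^ 2 / 2)) ^ m :=
          pow_le_pow_left₀ (Real.cosh_pos t).le (Real.cosh_le_exp_half_sq t) m
      _ = Real.exp ((m:ℝ) * t ^ 2 / 2) := by
          rw [← Real.exp_nat_mul]; congr 1; ring
  have hexp1 : t * D = (m:ℝ) ^ (2 * α - 1) := by
    rw [htdef, hDdef, ← Real.rpow_add hm0]; congr 1; ring
  have hexp2 : (m:ℝ) * t ^ 2 = (m:ℝ) ^ (2 * α - 1) := by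
    have h2 : t ^ 2 = (m:ℝ) ^ ((α - 1) * 2) := by
      rw [htdef, Real.rpow_mul hm0.le, Real.rpow_two]
    rw [h2]
    nth_rewrite 1 [← Real.rpow_one (m:ℝ)]
    rw [← Real.rpow_add hm0]; congr 1; ring
  calc (Fl.card : ℝ) ≤ ∑ c ∈ Fl, Real.exp (t * (((sc c : ℤ):ℝ) - D)) := step1
    _ ≤ ∑ c ∈ Finset.univ, Real.exp (t * (((sc c : ℤ):ℝ) - D)) := step2
    _ = (∑ c ∈ Finset.univ, Real.exp (t * ((sc c : ℤ):ℝ))) * Real.exp (-(t * D)) := step3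
    _ = (Real.exp t + Real.exp (-t)) ^ m * Real.exp (-(t * D)) := by rw [step4]
    _ ≤ 2 ^ m * Real.exp ((m:ℝ) * t ^ 2 / 2) * Real.exp (-(t * D)) := by
        exact mul_le_mul_of_nonneg_right step5 (Real.exp_pos _).le
    _ = 2 ^ m * Real.exp ((m:ℝ) * t ^ 2 / 2 - t * D) := by
        rw [mul_assoc, ← Real.exp_add]; ring_nf
    _ = 2 ^ m * Real.exp (-(m:ℝ) ^ (2 * α - 1) / 2) := by
        rw [hexp2, hexp1]; congr 1; ring

end MillAux

open MillAux Finset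

set_option maxHeartbeats 2000000 in
/-- (Improved main inequality) Let `n ≥ 2`, `m ≥ 1` be integers and `1/2 < α ≤ 1` a real
with `2·m^α` an integer and `2·m^α < n`. Let `a`, `b` be independent random variables
uniform on `{1, …, n}` and let `S_m`, `S'_m` be two simple symmetric random walks of `m`
steps started at `0`, everything mutually independent. With `A = a + S_m`, `B = b + S'_m`
and `Q = (n - 2m^α + 1)(n - 2m^α)/(n² - n)`:
`P(a < b | A < B) ≥ (1 - exp(-m^(2α-1)/2))² · Q · (1 - 1/n) + (1/2)·(1 - Q)·(1 - 1/n)`. -/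
theorem millionaires_improved_main_inequality
    {Ω : Type*} [MeasurableSpace Ω] (P : Measure Ω) [IsProbabilityMeasure P]
    (n m : ℕ) (hn : 2 ≤ n) (hm : 1 ≤ m)
    (α : ℝ) (hα : 1 / 2 < α) (hα1 : α ≤ 1)
    (hint : ∃ k : ℤ, (k : ℝ) = 2 * (m : ℝ) ^ α)
    (hlt : 2 * (m : ℝ) ^ α < n)
    (a b : Ω → ℤ) (X X' : Fin m → Ω → ℤ)
    (ha : Measurable a) (hb : Measurable b)
    (hX : ∀ i, Measurable (X i)) (hX' : ∀ i, Measurable (X' i))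
    (hua : ∀ k : ℤ, k ∈ Finset.Icc (1 : ℤ) (n : ℤ) → P {ω | a ω = k} = 1 / (n : ℝ≥0∞))
    (hub : ∀ k : ℤ, k ∈ Finset.Icc (1 : ℤ) (n : ℤ) → P {ω | b ω = k} = 1 / (n : ℝ≥0∞))
    (hone : ∀ i, P {ω | X i ω = 1} = 1 / 2)
    (hmone : ∀ i, P {ω | X i ω = -1} = 1 / 2)
    (hone' : ∀ i, P {ω | X' i ω = 1} = 1 / 2)
    (hmone' : ∀ i, P {ω | X' i ω = -1} = 1 / 2)
    (hindep : iIndepFun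
      (Sum.elim ![a, b] (Sum.elim X X') : (Fin 2 ⊕ (Fin m ⊕ Fin m)) → Ω → ℤ) P) :
    (1 - Real.exp (-(m : ℝ) ^ (2 * α - 1) / 2)) ^ 2
        * (((n : ℝ) - 2 * (m : ℝ) ^ α + 1) * ((n : ℝ) - 2 * (m : ℝ) ^ α)
            / ((n : ℝ) ^ 2 - n))
        * (1 - 1 / (n : ℝ))
      + (1 / 2)
        * (1 - ((n : ℝ) - 2 * (m : ℝ) ^ α + 1) * ((n : ℝ) - 2 * (m : ℝ) ^ α)
            / ((n : ℝ) ^ 2 - n))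
        * (1 - 1 / (n : ℝ))
      ≤ (P[{ω | a ω < b ω} | {ω | a ω + ∑ i, X i ω < b ω + ∑ i, X' i ω}]).toReal := by
  classical
  set K := Finset.Icc (1:ℤ) (n:ℤ) with hK
  set Cb := (Finset.univ : Finset (Fin m → Bool)) with hCb
  set F := (K ×ˢ K) ×ˢ (Cb ×ˢ Cb) with hF
  set T : Ω → ℤ × ℤ × ℤ × ℤ := fun ω => (a ω, b ω, ∑ i, X i ω, ∑ i, X' i ω) with hT
  set w : ℝ≥0∞ := (1 / (n:ℝ≥0∞)) * (1 / (n:ℝ≥0∞)) * ((1 / 2 : ℝ≥0∞) ^ m * (1 / 2 : ℝ≥0∞) ^ m)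
    with hw
  have hTm : Measurable T := by
    exact (ha.prodMk (hb.prodMk ((Finset.measurable_sum _ fun i _ => hX i).prodMk
      (Finset.measurable_sum _ fun i _ => hX' i))))
  have hTpre : ∀ G : Set (ℤ × ℤ × ℤ × ℤ), MeasurableSet (T ⁻¹' G) :=
    fun G => hTm (G.to_countable.measurableSet)
  set Atom : (ℤ × ℤ) × ((Fin m → Bool) × (Fin m → Bool)) → Set Ω :=
    fun q => {ω | a ω = q.1.1 ∧ b ω = q.1.2 ∧ (∀ k, X k ω = sg (q.2.1 k))
      ∧ (∀ k, X' k ω = sg (q.2.2 k))} with hAtom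
  have hAtomEq : ∀ q, Atom q = (a ⁻¹' {q.1.1}) ∩ ((b ⁻¹' {q.1.2}) ∩
      ((⋂ k, X k ⁻¹' {sg (q.2.1 k)}) ∩ (⋂ k, X' k ⁻¹' {sg (q.2.2 k)}))) := by
    intro q; ext ω
    simp [hAtom, Set.mem_iInter]
  have hAtomMeas : ∀ q, MeasurableSet (Atom q) := by
    intro q
    rw [hAtomEq]
    exact (ha (measurableSet_singleton _)).inter ((hb (measurableSet_singleton _)).inter
      ((MeasurableSet.iInter fun k => hX k (measurableSet_singleton _)).inter
        (MeasurableSet.iInter fun k => hX' k (measurableSet_singleton _))))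
  have hAtomProb : ∀ q ∈ F, P (Atom q) = w := by
    rintro ⟨⟨i, j⟩, c, c'⟩ hq
    rw [hF, Finset.mem_product] at hq
    obtain ⟨hij, -⟩ := hq
    rw [Finset.mem_product] at hij
    obtain ⟨hi, hj⟩ := hij
    set sets : (Fin 2 ⊕ (Fin m ⊕ Fin m)) → Set ℤ :=
      Sum.elim ![{i}, {j}] (Sum.elim (fun k => {sg (c k)}) (fun k => {sg (c' k)})) with hsets
    have hmeas : ∀ ι ∈ Finset.univ, MeasurableSet (sets ι) :=
      fun ι _ => (Set.to_countable _).measurableSet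
    have hkey := hindep.measure_inter_preimage_eq_mul Finset.univ hmeas
    have hLHS : (⋂ ι ∈ Finset.univ, (Sum.elim ![a, b] (Sum.elim X X') ι) ⁻¹' sets ι)
        = Atom ((i, j), c, c') := by
      ext ω
      simp only [Finset.mem_univ, Set.iInter_true, Set.mem_iInter, hAtom, Set.mem_setOf_eq,
        Sum.forall, Fin.forall_fin_two, hsets, Sum.elim_inl, Sum.elim_inr,
        Matrix.cons_val_zero, Matrix.cons_val_one, Matrix.head_cons,
        Set.mem_preimage, Set.mem_singleton_iff]
      tauto
    rw [hLHS] at hkey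
    rw [hkey]
    rw [Fintype.prod_sum_type]
    simp only [hsets, Sum.elim_inl, Sum.elim_inr]
    rw [Fintype.prod_sum_type]
    rw [Fin.prod_univ_two]
    simp only [Matrix.cons_val_zero, Matrix.cons_val_one, Matrix.head_cons, Sum.elim_inl,
      Sum.elim_inr]
    have hpa : P (a ⁻¹' {i}) = 1 / (n:ℝ≥0∞) := by
      rw [show a ⁻¹' {i} = {ω | a ω = i} from by ext ω; simp]
      exact hua i hi
    have hpb : P (b ⁻¹' {j}) = 1 / (n:ℝ≥0∞) := by
      rw [show b ⁻¹' {j} = {ω | b ω = j} from by ext ω; simp]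
      exact hub j hj
    have hpX : ∀ k, P (X k ⁻¹' {sg (c k)}) = 1 / 2 := by
      intro k
      cases hck : c k
      · rw [show X k ⁻¹' {sg false} = {ω | X k ω = -1} from by ext ω; simp [sg]]
        exact hmone k
      · rw [show X k ⁻¹' {sg true} = {ω | X k ω = 1} from by ext ω; simp [sg]]
        exact hone k
    have hpX' : ∀ k, P (X' k ⁻¹' {sg (c' k)}) = 1 / 2 := by
      intro k
      cases hck : c' k
      · rw [show X' k ⁻¹' {sg false} = {ω | X' k ω = -1} from by ext ω; simp [sg]]
        exact hmone' k
      · rw [show X' k ⁻¹' {sg true} = {ω | X' k ω = 1} from by ext ω; simp [sg]]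
        exact hone' k
    rw [hpa, hpb, Finset.prod_congr rfl (fun k _ => hpX k),
      Finset.prod_congr rfl (fun k _ => hpX' k), Finset.prod_const]
    simp [hw, Finset.card_univ]
  have hdisj : (↑F : Set ((ℤ × ℤ) × ((Fin m → Bool) × (Fin m → Bool)))).PairwiseDisjoint Atom := by
    intro q hq q' hq' hne
    rw [Function.onFun, Set.disjoint_left]
    intro ω hω hω'
    simp only [hAtom, Set.mem_setOf_eq] at hω hω'
    apply hne
    obtain ⟨h1, h2, h3, h4⟩ := hω
    obtain ⟨h1', h2', h3', h4'⟩ := hω'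
    have e1 : q.1.1 = q'.1.1 := by rw [← h1, ← h1']
    have e2 : q.1.2 = q'.1.2 := by rw [← h2, ← h2']
    have e3 : q.2.1 = q'.2.1 := funext fun k => sg_inj (by rw [← h3 k, ← h3' k])
    have e4 : q.2.2 = q'.2.2 := funext fun k => sg_inj (by rw [← h4 k, ← h4' k])
    exact Prod.ext (Prod.ext e1 e2) (Prod.ext e3 e4)
  have hcardK : K.card = n := by rw [hK, Int.card_Icc]; simp
  have hcardF : F.card = n * n * (2 ^ m * 2 ^ m) := by
    rw [hF, Finset.card_product, Finset.card_product, Finset.card_product, hcardK, hCb]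
    simp [Finset.card_univ]
  have hn0 : (n : ℝ≥0∞) ≠ 0 := by
    simp only [ne_eq, Nat.cast_eq_zero]; omega
  have hw1 : (F.card : ℝ≥0∞) * w = 1 := by
    rw [hcardF, hw]
    push_cast
    have e1 : (n : ℝ≥0∞) * (1 / n) = 1 := by
      rw [one_div, ENNReal.mul_inv_cancel hn0 (ENNReal.natCast_ne_top n)]
    have e2 : (2 : ℝ≥0∞) ^ m * (1 / 2) ^ m = 1 := by
      rw [← mul_pow, one_div, ENNReal.mul_inv_cancel (by norm_num) (by norm_num), one_pow]
    calc ((n:ℝ≥0∞) * n * (2 ^ m * 2 ^ m)) * (1 / (n:ℝ≥0∞) * (1 / n) * ((1/2) ^ m * (1/2) ^ m))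
        = ((n:ℝ≥0∞) * (1/n)) * ((n:ℝ≥0∞) * (1/n)) * (((2:ℝ≥0∞))^m * (1/2)^m)
          * (((2:ℝ≥0∞))^m * (1/2)^m) := by ring
      _ = 1 := by rw [e1, e2]; simp
  have hUmeas : MeasurableSet (⋃ q ∈ F, Atom q) :=
    Finset.measurableSet_biUnion _ fun q _ => hAtomMeas q
  have hcover : P (⋃ q ∈ F, Atom q) = 1 := by
    rw [measure_biUnion_finset hdisj fun q _ => hAtomMeas q,
      Finset.sum_congr rfl hAtomProb, Finset.sum_const, nsmul_eq_mul, hw1]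
  have hUc : P (⋃ q ∈ F, Atom q)ᶜ = 0 := by
    rw [measure_compl hUmeas (measure_ne_top _ _), hcover, measure_univ, tsub_self]
  have master : ∀ G : Set (ℤ × ℤ × ℤ × ℤ),
      P (T ⁻¹' G) = ((F.filter
          (fun q => (q.1.1, q.1.2, sc q.2.1, sc q.2.2) ∈ G)).card : ℝ≥0∞) * w := by
    intro G
    have hsplit : P (T ⁻¹' G) = P (T ⁻¹' G ∩ ⋃ q ∈ F, Atom q) := by
      have := measure_inter_add_diff (μ := P) (T ⁻¹' G) hUmeas
      have hz : P (T ⁻¹' G \ ⋃ q ∈ F, Atom q) = 0 :=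
        le_antisymm (le_trans (measure_mono (Set.diff_subset_compl _ _)) hUc.le) zero_le
      rw [← this, hz, add_zero]
    rw [hsplit, Set.inter_iUnion₂,
      measure_biUnion_finset (hdisj.mono fun q => Set.inter_subset_right)
        (fun q _ => (hTpre G).inter (hAtomMeas q))]
    have hterm : ∀ q ∈ F, P (T ⁻¹' G ∩ Atom q)
        = if (q.1.1, q.1.2, sc q.2.1, sc q.2.2) ∈ G then w else 0 := by
      intro q hq
      have hTval : ∀ ω ∈ Atom q, T ω = (q.1.1, q.1.2, sc q.2.1, sc q.2.2) := by
        intro ω hω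
        simp only [hAtom, Set.mem_setOf_eq] at hω
        obtain ⟨h1, h2, h3, h4⟩ := hω
        simp only [hT, sc, Prod.mk.injEq]
        exact ⟨h1, h2, Finset.sum_congr rfl fun k _ => h3 k,
          Finset.sum_congr rfl fun k _ => h4 k⟩
      by_cases hg : (q.1.1, q.1.2, sc q.2.1, sc q.2.2) ∈ G
      · rw [if_pos hg, ← hAtomProb q hq]
        congr 1
        rw [Set.inter_eq_right]
        intro ω hω
        rw [Set.mem_preimage, hTval ω hω]
        exact hg
      · rw [if_neg hg]
        convert measure_empty (μ := P)
        rw [Set.eq_empty_iff_forall_notMem]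
        rintro ω ⟨hω1, hω2⟩
        rw [Set.mem_preimage, hTval ω hω2] at hω1
        exact hg hω1
    rw [Finset.sum_congr rfl hterm, ← Finset.sum_filter, Finset.sum_const, nsmul_eq_mul]
  -- the two events
  set G1 : Set (ℤ × ℤ × ℤ × ℤ) := {z | z.1 + z.2.2.1 < z.2.1 + z.2.2.2} with hG1
  set G2 : Set (ℤ × ℤ × ℤ × ℤ) := {z | (z.1 + z.2.2.1 < z.2.1 + z.2.2.2) ∧ z.1 < z.2.1}
    with hG2
  have hE1 : {ω | a ω + ∑ i, X i ω < b ω + ∑ i, X' i ω} = T ⁻¹' G1 := by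
    ext ω; simp [hT, hG1]
  have hE2 : T ⁻¹' G1 ∩ {ω | a ω < b ω} = T ⁻¹' G2 := by
    ext ω; simp only [Set.mem_inter_iff, Set.mem_preimage, hT, hG1, hG2, Set.mem_setOf_eq]
  set N1 := (F.filter (fun q => (q.1.1, q.1.2, sc q.2.1, sc q.2.2) ∈ G1)).card with hN1
  set N2 := (F.filter (fun q => (q.1.1, q.1.2, sc q.2.1, sc q.2.2) ∈ G2)).card with hN2
  have hPt : P (T ⁻¹' G1) = (N1 : ℝ≥0∞) * w := by
    rw [master G1, hN1]; congr!
  have hPts : P (T ⁻¹' G2) = (N2 : ℝ≥0∞) * w := by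
    rw [master G2, hN2]; congr!
  -- N1 positivity and upper bound
  have hN1pos : 0 < N1 := by
    rw [hN1]
    apply Finset.card_pos.mpr
    refine ⟨((1, (n:ℤ)), (fun _ => false, fun _ => true)), ?_⟩
    rw [Finset.mem_filter]
    constructor
    · simp only [hF, hK, hCb, Finset.mem_product, Finset.mem_Icc, Finset.mem_univ, and_true,
        true_and]
      constructor
      · constructor <;> [omega; exact_mod_cast (by omega : (1:ℤ) ≤ (n:ℤ))]
      · constructor <;> [exact_mod_cast (by omega : (1:ℤ) ≤ (n:ℤ)); omega]
    · show ((1:ℤ), (n:ℤ), sc (fun _ => false), sc (fun _ => true)) ∈ G1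
      rw [hG1]
      simp only [Set.mem_setOf_eq, sc_const_false, sc_const_true]
      have hn2 : (2:ℤ) ≤ (n:ℤ) := by exact_mod_cast hn
      have hm1 : (1:ℤ) ≤ (m:ℤ) := by exact_mod_cast hm
      omega
  have hN1le : 2 * N1 ≤ F.card := by
    have hcard_eq : N1 = (F.filter
        (fun q => ((q.1.2, q.1.1, sc q.2.2, sc q.2.1) : ℤ × ℤ × ℤ × ℤ) ∈ G1)).card := by
      rw [hN1]
      apply Finset.card_nbij' (fun q => ((q.1.2, q.1.1), (q.2.2, q.2.1)))
        (fun q => ((q.1.2, q.1.1), (q.2.2, q.2.1)))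
      · intro q hq
        rw [Finset.mem_coe, Finset.mem_filter] at hq ⊢
        refine ⟨?_, hq.2⟩
        have := hq.1
        simp only [hF, Finset.mem_product] at this ⊢
        exact ⟨⟨this.1.2, this.1.1⟩, ⟨this.2.2, this.2.1⟩⟩
      · intro q hq
        rw [Finset.mem_coe, Finset.mem_filter] at hq ⊢
        refine ⟨?_, hq.2⟩
        have := hq.1
        simp only [hF, Finset.mem_product] at this ⊢
        exact ⟨⟨this.1.2, this.1.1⟩, ⟨this.2.2, this.2.1⟩⟩
      · intro q _; simp
      · intro q _; simp
    have hdisj12 : Disjoint (F.filter (fun q => (q.1.1, q.1.2, sc q.2.1, sc q.2.2) ∈ G1))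
        (F.filter (fun q => ((q.1.2, q.1.1, sc q.2.2, sc q.2.1) : ℤ × ℤ × ℤ × ℤ) ∈ G1)) := by
      rw [Finset.disjoint_left]
      intro q hq hq'
      rw [Finset.mem_filter] at hq hq'
      have h1 := hq.2
      have h2 := hq'.2
      rw [hG1] at h1 h2
      simp only [Set.mem_setOf_eq] at h1 h2
      omega
    have hsub : (F.filter (fun q => (q.1.1, q.1.2, sc q.2.1, sc q.2.2) ∈ G1))
        ∪ (F.filter (fun q => ((q.1.2, q.1.1, sc q.2.2, sc q.2.1) : ℤ × ℤ × ℤ × ℤ) ∈ G1))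
        ⊆ F := Finset.union_subset (Finset.filter_subset _ _) (Finset.filter_subset _ _)
    have := Finset.card_le_card hsub
    rw [Finset.card_union_of_disjoint hdisj12] at this
    omega
  -- rewrite the conditional probability
  rw [hE1, ProbabilityTheory.cond_apply (hTpre G1), hE2, hPt, hPts]
  have hwne : w ≠ 0 := by
    intro h; rw [h, mul_zero] at hw1; exact zero_ne_one hw1
  have hFcard0 : (F.card : ℝ≥0∞) ≠ 0 := by
    rw [hcardF]
    simp only [ne_eq, Nat.cast_eq_zero, Nat.mul_eq_zero, Nat.pow_eq_zero]
    omega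
  have hwtop : w ≠ ⊤ := by
    intro h; rw [h, ENNReal.mul_top hFcard0] at hw1
    exact ENNReal.top_ne_one hw1
  simp only [ENNReal.toReal_mul, ENNReal.toReal_inv, ENNReal.toReal_natCast]
  have hwr : 0 < w.toReal := ENNReal.toReal_pos hwne hwtop
  have hN1R : (0:ℝ) < (N1:ℝ) := by exact_mod_cast hN1pos
  have hVal : ((N1:ℝ) * w.toReal)⁻¹ * ((N2:ℝ) * w.toReal) = (N2:ℝ) / (N1:ℝ) := by
    rw [mul_inv]
    have hc : (w.toReal)⁻¹ * w.toReal = 1 := inv_mul_cancel₀ hwr.ne'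
    calc ((N1:ℝ)⁻¹ * (w.toReal)⁻¹) * ((N2:ℝ) * w.toReal)
        = ((N2:ℝ) * (N1:ℝ)⁻¹) * ((w.toReal)⁻¹ * w.toReal) := by ring
      _ = (N2:ℝ) / (N1:ℝ) := by rw [hc, mul_one, div_eq_mul_inv]
  rw [hVal]
  -- counting part
  obtain ⟨dZ, hdZ⟩ := hint
  have hmR : (1:ℝ) ≤ (m:ℝ) := by exact_mod_cast hm
  have hD1 : (1:ℝ) ≤ (m:ℝ) ^ α := by
    calc (1:ℝ) = (m:ℝ) ^ (0:ℝ) := (Real.rpow_zero _).symm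
      _ ≤ (m:ℝ) ^ α := Real.rpow_le_rpow_of_exponent_le hmR (by linarith)
  have hdZ2 : 2 ≤ dZ := by
    have h2 : (2:ℝ) ≤ (dZ:ℝ) := by rw [hdZ]; linarith
    exact_mod_cast h2
  have hdZn : dZ < (n:ℤ) := by
    have h2 : (dZ:ℝ) < (n:ℝ) := by rw [hdZ]; exact hlt
    exact_mod_cast h2
  -- decompose N2 as a sum over (i,j)
  have hN2sum : N2 = ∑ ij ∈ K ×ˢ K, ((Cb ×ˢ Cb).filter
      (fun cc => ((ij.1, ij.2, sc cc.1, sc cc.2) : ℤ × ℤ × ℤ × ℤ) ∈ G2)).card := by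
    rw [hN2, hF]
    rw [card_filter_product (K ×ˢ K) (Cb ×ˢ Cb)
      (fun ij cc => ((ij.1, ij.2, sc cc.1, sc cc.2) : ℤ × ℤ × ℤ × ℤ) ∈ G2)]
  set far := (K ×ˢ K).filter (fun p => p.1 + dZ ≤ p.2) with hfar
  set ltf := (K ×ˢ K).filter (fun p => p.1 + 1 ≤ p.2) with hltf
  have hfarsub : far ⊆ ltf := by
    rw [hfar, hltf]
    intro p hp
    rw [Finset.mem_filter] at hp ⊢
    exact ⟨hp.1, by omega⟩
  have hC1 : (far.card : ℤ) * 2 = ((n:ℤ) - dZ) * ((n:ℤ) - dZ + 1) := by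
    rw [hfar, hK]
    convert count_pairs n dZ (by omega) (by omega) using 4
  have hCL : (ltf.card : ℤ) * 2 = ((n:ℤ) - 1) * ((n:ℤ) - 1 + 1) := by
    rw [hltf, hK]
    convert count_pairs n 1 le_rfl (by exact_mod_cast (by omega : 1 ≤ n)) using 4
  have hfarcard_le : far.card ≤ ltf.card := Finset.card_le_card hfarsub
  have hsdcard : (ltf \ far).card = ltf.card - far.card := Finset.card_sdiff_of_subset hfarsub
  -- exponential bound quantities
  set eB := Real.exp (-(m:ℝ) ^ (2 * α - 1) / 2) with heB
  have heB0 : 0 < eB := Real.exp_pos _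
  have heB1 : eB ≤ 1 := by
    rw [heB, Real.exp_le_one_iff]
    have h0 : (0:ℝ) ≤ (m:ℝ) ^ (2 * α - 1) := Real.rpow_nonneg (by positivity) _
    linarith
  -- count of sign vectors with small sum
  have hcnt1 : ((2:ℝ)^m) * (1 - eB)
      ≤ ((Cb.filter (fun c => ((sc c : ℤ):ℝ) < (m:ℝ)^α)).card : ℝ) := by
    have hsplit := Finset.card_filter_add_card_filter_not
      (s := Cb) (p := fun c => ((sc c : ℤ):ℝ) < (m:ℝ)^α)
    have hneg : (Cb.filter (fun c => ¬ (((sc c : ℤ):ℝ) < (m:ℝ)^α))).card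
        = (Cb.filter (fun c => (m:ℝ)^α ≤ ((sc c : ℤ):ℝ))).card := by
      congr 1
      apply Finset.filter_congr
      intro c _
      simp [not_lt]
    have hhoeff : ((Cb.filter (fun c => (m:ℝ)^α ≤ ((sc c : ℤ):ℝ))).card : ℝ)
        ≤ 2^m * eB := by
      rw [heB, hCb]
      convert hoeff_count m hm α hα hα1 using 4
    have hcardCb : Cb.card = 2^m := by rw [hCb]; exact card_univ_bool m
    rw [hneg, hcardCb] at hsplit
    have h2 : ((Cb.filter (fun c => ((sc c : ℤ):ℝ) < (m:ℝ)^α)).card : ℝ)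
        = 2^m - ((Cb.filter (fun c => (m:ℝ)^α ≤ ((sc c : ℤ):ℝ))).card : ℝ) := by
      have := congrArg (fun x : ℕ => (x:ℝ)) hsplit
      push_cast at this ⊢
      linarith
    rw [h2]
    linarith
  have hcnt2 : ((2:ℝ)^m) * (1 - eB)
      ≤ ((Cb.filter (fun c => -((m:ℝ)^α) < ((sc c : ℤ):ℝ))).card : ℝ) := by
    have hsplit := Finset.card_filter_add_card_filter_not
      (s := Cb) (p := fun c => -((m:ℝ)^α) < ((sc c : ℤ):ℝ))
    have hneg : (Cb.filter (fun c => ¬ (-((m:ℝ)^α) < ((sc c : ℤ):ℝ)))).card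
        = (Cb.filter (fun c => ((sc c : ℤ):ℝ) ≤ -((m:ℝ)^α))).card := by
      congr 1
      apply Finset.filter_congr
      intro c _
      simp [not_lt]
    have hswap : (Cb.filter (fun c => ((sc c : ℤ):ℝ) ≤ -((m:ℝ)^α))).card
        = (Cb.filter (fun c => (m:ℝ)^α ≤ ((sc c : ℤ):ℝ))).card := by
      rw [hCb]
      convert neg_count m ((m:ℝ)^α) using 4
    have hhoeff : ((Cb.filter (fun c => (m:ℝ)^α ≤ ((sc c : ℤ):ℝ))).card : ℝ)
        ≤ 2^m * eB := by
      rw [heB, hCb]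
      convert hoeff_count m hm α hα hα1 using 4
    have hcardCb : Cb.card = 2^m := by rw [hCb]; exact card_univ_bool m
    rw [hneg, hswap, hcardCb] at hsplit
    have h2 : ((Cb.filter (fun c => -((m:ℝ)^α) < ((sc c : ℤ):ℝ))).card : ℝ)
        = 2^m - ((Cb.filter (fun c => (m:ℝ)^α ≤ ((sc c : ℤ):ℝ))).card : ℝ) := by
      have := congrArg (fun x : ℕ => (x:ℝ)) hsplit
      push_cast at this ⊢
      linarith
    rw [h2]
    linarith
  -- per-pair lower bounds
  have hfar_bound : ∀ p ∈ far, ((2:ℝ)^m * (1 - eB)) * ((2:ℝ)^m * (1 - eB))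
      ≤ (((Cb ×ˢ Cb).filter
        (fun cc => ((p.1, p.2, sc cc.1, sc cc.2) : ℤ × ℤ × ℤ × ℤ) ∈ G2)).card : ℝ) := by
    intro p hp
    rw [hfar, Finset.mem_filter] at hp
    obtain ⟨hpK, hpd⟩ := hp
    have hdR : (p.1:ℝ) + 2 * (m:ℝ)^α ≤ (p.2:ℝ) := by
      have : ((p.1 + dZ : ℤ):ℝ) ≤ ((p.2 : ℤ):ℝ) := by exact_mod_cast hpd
      push_cast at this
      linarith [this, hdZ]
    have hsub : (Cb.filter (fun c => ((sc c : ℤ):ℝ) < (m:ℝ)^α))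
        ×ˢ (Cb.filter (fun c => -((m:ℝ)^α) < ((sc c : ℤ):ℝ)))
        ⊆ (Cb ×ˢ Cb).filter
          (fun cc => ((p.1, p.2, sc cc.1, sc cc.2) : ℤ × ℤ × ℤ × ℤ) ∈ G2) := by
      intro cc hcc
      rw [Finset.mem_product] at hcc
      obtain ⟨hl, hr⟩ := hcc
      rw [Finset.mem_filter] at hl hr
      rw [Finset.mem_filter, Finset.mem_product]
      refine ⟨⟨hl.1, hr.1⟩, ?_⟩
      rw [hG2]
      simp only [Set.mem_setOf_eq]
      constructor
      · have hlt1 : ((p.1 + sc cc.1 : ℤ):ℝ) < ((p.2 + sc cc.2 : ℤ):ℝ) := by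
          push_cast
          have := hl.2
          have := hr.2
          linarith
        exact_mod_cast hlt1
      · have hlt2 : ((p.1:ℤ):ℝ) < ((p.2:ℤ):ℝ) := by linarith
        exact_mod_cast hlt2
    calc ((2:ℝ)^m * (1 - eB)) * ((2:ℝ)^m * (1 - eB))
        ≤ ((Cb.filter (fun c => ((sc c : ℤ):ℝ) < (m:ℝ)^α)).card : ℝ)
          * ((Cb.filter (fun c => -((m:ℝ)^α) < ((sc c : ℤ):ℝ))).card : ℝ) := by
          apply mul_le_mul hcnt1 hcnt2 (mul_nonneg (by positivity) (by linarith)) (by positivity)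
      _ = (((Cb.filter (fun c => ((sc c : ℤ):ℝ) < (m:ℝ)^α))
          ×ˢ (Cb.filter (fun c => -((m:ℝ)^α) < ((sc c : ℤ):ℝ)))).card : ℝ) := by
          rw [Finset.card_product]; push_cast; ring
      _ ≤ _ := by exact_mod_cast Nat.cast_le.mpr (Finset.card_le_card hsub)
  have hnear_bound : ∀ p ∈ ltf, ((2:ℝ)^m * (2:ℝ)^m) / 2
      ≤ (((Cb ×ˢ Cb).filter
        (fun cc => ((p.1, p.2, sc cc.1, sc cc.2) : ℤ × ℤ × ℤ × ℤ) ∈ G2)).card : ℝ) := by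
    intro p hp
    rw [hltf, Finset.mem_filter] at hp
    obtain ⟨hpK, hpd⟩ := hp
    have hsub : ((Cb ×ˢ Cb).filter (fun cc => sc cc.1 ≤ sc cc.2))
        ⊆ (Cb ×ˢ Cb).filter
          (fun cc => ((p.1, p.2, sc cc.1, sc cc.2) : ℤ × ℤ × ℤ × ℤ) ∈ G2) := by
      intro cc hcc
      rw [Finset.mem_filter] at hcc ⊢
      refine ⟨hcc.1, ?_⟩
      rw [hG2]
      simp only [Set.mem_setOf_eq]
      exact ⟨by omega, by omega⟩
    have hhalf : 2^m * 2^m ≤ 2 * ((Cb ×ˢ Cb).filter (fun cc => sc cc.1 ≤ sc cc.2)).card := by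
      rw [hCb]
      convert half_count m using 5
    have hle := Finset.card_le_card hsub
    have h1 : ((2:ℝ)^m * (2:ℝ)^m)
        ≤ 2 * (((Cb ×ˢ Cb).filter (fun cc => sc cc.1 ≤ sc cc.2)).card : ℝ) := by
      exact_mod_cast hhalf
    have h2 : (((Cb ×ˢ Cb).filter (fun cc => sc cc.1 ≤ sc cc.2)).card : ℝ)
        ≤ (((Cb ×ˢ Cb).filter
          (fun cc => ((p.1, p.2, sc cc.1, sc cc.2) : ℤ × ℤ × ℤ × ℤ) ∈ G2)).card : ℝ) := by
      exact_mod_cast hle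
    linarith
  -- assemble the lower bound on N2
  have hsum_far : (far.card : ℝ) * (((2:ℝ)^m * (1 - eB)) * ((2:ℝ)^m * (1 - eB)))
      ≤ ∑ p ∈ far, (((Cb ×ˢ Cb).filter
        (fun cc => ((p.1, p.2, sc cc.1, sc cc.2) : ℤ × ℤ × ℤ × ℤ) ∈ G2)).card : ℝ) := by
    have := Finset.card_nsmul_le_sum far _ _ hfar_bound
    rwa [nsmul_eq_mul] at this
  have hsum_near : ((ltf \ far).card : ℝ) * (((2:ℝ)^m * (2:ℝ)^m) / 2)
      ≤ ∑ p ∈ ltf \ far, (((Cb ×ˢ Cb).filter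
        (fun cc => ((p.1, p.2, sc cc.1, sc cc.2) : ℤ × ℤ × ℤ × ℤ) ∈ G2)).card : ℝ) := by
    have := Finset.card_nsmul_le_sum (ltf \ far) _ _
      (fun p hp => hnear_bound p (Finset.mem_sdiff.mp hp).1)
    rwa [nsmul_eq_mul] at this
  have hN2lb : (far.card : ℝ) * (((2:ℝ)^m * (1 - eB)) * ((2:ℝ)^m * (1 - eB)))
      + ((ltf \ far).card : ℝ) * (((2:ℝ)^m * (2:ℝ)^m) / 2) ≤ (N2 : ℝ) := by
    have hcast : (N2 : ℝ) = ∑ ij ∈ K ×ˢ K, (((Cb ×ˢ Cb).filter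
        (fun cc => ((ij.1, ij.2, sc cc.1, sc cc.2) : ℤ × ℤ × ℤ × ℤ) ∈ G2)).card : ℝ) := by
      rw [hN2sum]; push_cast; rfl
    rw [hcast]
    have hsplit2 : ∑ p ∈ ltf, (((Cb ×ˢ Cb).filter
          (fun cc => ((p.1, p.2, sc cc.1, sc cc.2) : ℤ × ℤ × ℤ × ℤ) ∈ G2)).card : ℝ)
        = ∑ p ∈ ltf \ far, (((Cb ×ˢ Cb).filter
          (fun cc => ((p.1, p.2, sc cc.1, sc cc.2) : ℤ × ℤ × ℤ × ℤ) ∈ G2)).card : ℝ)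
          + ∑ p ∈ far, (((Cb ×ˢ Cb).filter
          (fun cc => ((p.1, p.2, sc cc.1, sc cc.2) : ℤ × ℤ × ℤ × ℤ) ∈ G2)).card : ℝ) :=
      (Finset.sum_sdiff hfarsub).symm
    have hmono : ∑ p ∈ ltf, (((Cb ×ˢ Cb).filter
          (fun cc => ((p.1, p.2, sc cc.1, sc cc.2) : ℤ × ℤ × ℤ × ℤ) ∈ G2)).card : ℝ)
        ≤ ∑ ij ∈ K ×ˢ K, (((Cb ×ˢ Cb).filter
          (fun cc => ((ij.1, ij.2, sc cc.1, sc cc.2) : ℤ × ℤ × ℤ × ℤ) ∈ G2)).card : ℝ) := by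
      apply Finset.sum_le_sum_of_subset_of_nonneg
      · rw [hltf]; exact Finset.filter_subset _ _
      · intro p _ _; positivity
    linarith [hsum_far, hsum_near, hsplit2, hmono]
  -- final arithmetic
  have hnR : (2:ℝ) ≤ (n:ℝ) := by exact_mod_cast hn
  have hnne : (n:ℝ) ≠ 0 := by linarith
  have hden : (0:ℝ) < (n:ℝ)^2 - (n:ℝ) := by nlinarith
  have hc1R : ((far.card : ℝ)) * 2 = ((n:ℝ) - 2*(m:ℝ)^α) * ((n:ℝ) - 2*(m:ℝ)^α + 1) := by
    have h := congrArg (fun z : ℤ => (z:ℝ)) hC1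
    push_cast at h
    rw [hdZ] at h
    linarith
  have hclR : ((ltf.card : ℝ)) * 2 = ((n:ℝ) - 1) * (n:ℝ) := by
    have h := congrArg (fun z : ℤ => (z:ℝ)) hCL
    push_cast at h
    linarith
  have hsdR : ((ltf \ far).card : ℝ) = (ltf.card : ℝ) - (far.card : ℝ) := by
    rw [hsdcard, Nat.cast_sub hfarcard_le]
  have hN1ub : (N1:ℝ) * 2 ≤ (n:ℝ) * (n:ℝ) * ((2:ℝ)^m * (2:ℝ)^m) := by
    have h := hN1le
    rw [hcardF] at h
    have h2 := (Nat.cast_le (α := ℝ)).mpr h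
    push_cast at h2
    linarith
  have hv : (0:ℝ) ≤ 1 - 1/(n:ℝ) := by
    rw [sub_nonneg, div_le_one (by linarith : (0:ℝ) < (n:ℝ))]
    linarith
  rw [le_div_iff₀ hN1R]
  set RR := (1 - eB)^2 * (((n:ℝ) - 2*(m:ℝ)^α + 1) * ((n:ℝ) - 2*(m:ℝ)^α)
      / ((n:ℝ)^2 - (n:ℝ))) * (1 - 1/(n:ℝ))
      + (1/2) * (1 - ((n:ℝ) - 2*(m:ℝ)^α + 1) * ((n:ℝ) - 2*(m:ℝ)^α)
      / ((n:ℝ)^2 - (n:ℝ))) * (1 - 1/(n:ℝ)) with hRR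
  have hQt0 : (0:ℝ) ≤ ((n:ℝ) - 2*(m:ℝ)^α + 1) * ((n:ℝ) - 2*(m:ℝ)^α) / ((n:ℝ)^2 - (n:ℝ)) := by
    apply div_nonneg _ hden.le
    have h1 : (0:ℝ) ≤ (n:ℝ) - 2*(m:ℝ)^α := by linarith
    nlinarith
  have hQt1 : ((n:ℝ) - 2*(m:ℝ)^α + 1) * ((n:ℝ) - 2*(m:ℝ)^α) / ((n:ℝ)^2 - (n:ℝ)) ≤ 1 := by
    rw [div_le_one hden]
    nlinarith [hD1, hlt, hnR]
  have hR0 : (0:ℝ) ≤ RR := by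
    rw [hRR]
    apply add_nonneg
    · exact mul_nonneg (mul_nonneg (sq_nonneg _) hQt0) hv
    · exact mul_nonneg (mul_nonneg (by norm_num) (by linarith)) hv
  have hkey : RR * ((n:ℝ) * (n:ℝ) * ((2:ℝ)^m * (2:ℝ)^m) / 2)
      = (far.card : ℝ) * (((2:ℝ)^m * (1 - eB)) * ((2:ℝ)^m * (1 - eB)))
        + ((ltf.card : ℝ) - (far.card : ℝ)) * (((2:ℝ)^m * (2:ℝ)^m) / 2) := by
    have hc1' : (far.card : ℝ)
        = ((n:ℝ) - 2*(m:ℝ)^α) * ((n:ℝ) - 2*(m:ℝ)^α + 1) / 2 := by linarith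
    have hcl' : (ltf.card : ℝ) = ((n:ℝ) - 1) * (n:ℝ) / 2 := by linarith
    rw [hRR, hc1', hcl']
    have hn1 : (n:ℝ) - 1 ≠ 0 := by linarith
    field_simp
  have hstep1 : RR * (N1:ℝ) ≤ RR * ((n:ℝ) * (n:ℝ) * ((2:ℝ)^m * (2:ℝ)^m) / 2) :=
    mul_le_mul_of_nonneg_left (by linarith) hR0
  have hN2lb' : (far.card : ℝ) * (((2:ℝ)^m * (1 - eB)) * ((2:ℝ)^m * (1 - eB)))
      + ((ltf.card : ℝ) - (far.card : ℝ)) * (((2:ℝ)^m * (2:ℝ)^m) / 2) ≤ (N2 : ℝ) := by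
    rw [← hsdR]
    exact hN2lb
  have hfin : RR * ((n:ℝ) * (n:ℝ) * ((2:ℝ)^m * (2:ℝ)^m) / 2) ≤ (N2 : ℝ) := by
    rw [hkey]; exact hN2lb'
  exact le_trans hstep1 hfin
end
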